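/- arXiv:2311.09364 — 7 statements merged into one kernel-verified Lean document; each statement's English description precedes it below -/
import Mathlib

section
/- If e is a compliant edge of a graph G and G - e is outerplanar, then G is outerplanar. -/
open SimpleGraph

universe u

/-- A flat (suspended) path: a path of length at least 2 all of whose internal
vertices have degree 2 in `G`. -/
def IsFlatPath {V : Type u} (G : SimpleGraph V) {x y : V} (p : G.Walk x y) : Prop :=
  p.IsPath ∧ 2 ≤ p.length ∧
    ∀ v ∈ p.support, v ≠ x → v ≠ y → (G.neighborSet v).ncard = 2

/-- An edge `xy` is compliant if `x` and `y` are also joined by a flat path. -/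
def Compliant {V : Type u} (G : SimpleGraph V) (x y : V) : Prop :=
  G.Adj x y ∧ ∃ p : G.Walk x y, IsFlatPath G p

/-- A graph is 2-connected if it has at least 3 vertices and remains connected
after deleting any single vertex. -/
def TwoConnected {V : Type u} (G : SimpleGraph V) : Prop :=
  3 ≤ Nat.card V ∧ ∀ v : V, ((⊤ : G.Subgraph).deleteVerts {v}).coe.Connected

/-- A (finite) graph is a cycle iff it is connected and 2-regular. -/
def IsCycleGraph {V : Type u} (G : SimpleGraph V) : Prop :=
  G.Connected ∧ ∀ v : V, (G.neighborSet v).ncard = 2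

/-- Data exhibiting a subgraph of `G` which is a subdivision of `H`:
branch vertices are given by an injection `f`, and each edge of `H` is
replaced by a path in `G`, these paths being internally disjoint and their
internal vertices avoiding the branch vertices. -/
structure SubdivisionIn {V : Type u} {W : Type*} (G : SimpleGraph V) (H : SimpleGraph W) where
  f : W → V
  inj : Function.Injective f
  path : ∀ ⦃u v : W⦄, H.Adj u v → G.Walk (f u) (f v)
  isPath : ∀ ⦃u v : W⦄ (h : H.Adj u v), (path h).IsPath
  internal_not_branch : ∀ ⦃u v : W⦄ (h : H.Adj u v), ∀ w ∈ (path h).support,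
      (∃ z, w = f z) → w = f u ∨ w = f v
  internal_disjoint : ∀ ⦃u v u' v' : W⦄ (h : H.Adj u v) (h' : H.Adj u' v'),
      s(u, v) ≠ s(u', v') → ∀ w ∈ (path h).support, w ∈ (path h').support →
        w = f u ∨ w = f v

/-- The vertices of the subdivided subgraph. -/
def SubdivisionIn.verts {V : Type u} {W : Type*} {G : SimpleGraph V} {H : SimpleGraph W}
    (D : SubdivisionIn G H) : Set V :=
  {w | ∃ (u v : W) (h : H.Adj u v), w ∈ (D.path h).support}

/-- `G` contains a subdivision of `H` as a subgraph. -/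
def ContainsSubdivision {V : Type u} {W : Type*} (G : SimpleGraph V) (H : SimpleGraph W) : Prop :=
  Nonempty (SubdivisionIn G H)

/-- A graph is outerplanar iff it contains no subdivision of `K₄` or `K_{2,3}`
as a subgraph. -/
def Outerplanar {V : Type u} (G : SimpleGraph V) : Prop :=
  ¬ ContainsSubdivision G (⊤ : SimpleGraph (Fin 4)) ∧
  ¬ ContainsSubdivision G (completeBipartiteGraph (Fin 2) (Fin 3))

section Helpers

variable {V : Type u} {G : SimpleGraph V}

lemma mem_support_of_mem_edge {a b : V} {p : G.Walk a b} {e : Sym2 V} (he : e ∈ p.edges)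
    {w : V} (hw : w ∈ e) : w ∈ p.support := by
  induction e with
  | _ c d =>
    rcases Sym2.mem_iff.mp hw with rfl | rfl
    · exact p.fst_mem_support_of_mem_edges he
    · exact p.snd_mem_support_of_mem_edges he

/-- In a path, at most one edge contains the start vertex. -/
lemma edge_at_start_unique {a b : V} {p : G.Walk a b} (hp : p.IsPath)
    {e1 e2 : Sym2 V} (h1 : e1 ∈ p.edges) (h2 : e2 ∈ p.edges)
    (ha1 : a ∈ e1) (ha2 : a ∈ e2) : e1 = e2 := by
  induction p with
  | nil => simp at h1
  | cons h q ih =>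
    rw [SimpleGraph.Walk.cons_isPath_iff] at hp
    rw [SimpleGraph.Walk.edges_cons, List.mem_cons] at h1 h2
    have key : ∀ e ∈ q.edges, _root_.cast (rfl : Sym2 V = Sym2 V) e = e := fun _ _ => rfl
    rcases h1 with h1 | h1
    · rcases h2 with h2 | h2
      · rw [h1, h2]
      · exact absurd (mem_support_of_mem_edge h2 ha2) hp.2
    · exact absurd (mem_support_of_mem_edge h1 ha1) hp.2

lemma edge_at_end_unique {a b : V} {p : G.Walk a b} (hp : p.IsPath)
    {e1 e2 : Sym2 V} (h1 : e1 ∈ p.edges) (h2 : e2 ∈ p.edges)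
    (hb1 : b ∈ e1) (hb2 : b ∈ e2) : e1 = e2 := by
  apply edge_at_start_unique hp.reverse (e1 := e1) (e2 := e2) <;>
    simp [SimpleGraph.Walk.edges_reverse, h1, h2, hb1, hb2]

/-- In a path, at most two edges contain any given vertex. -/
lemma edges_at_vertex_le_two {a b : V} {p : G.Walk a b} (hp : p.IsPath)
    {w : V} {e1 e2 e3 : Sym2 V} (h1 : e1 ∈ p.edges) (h2 : e2 ∈ p.edges) (h3 : e3 ∈ p.edges)
    (hw1 : w ∈ e1) (hw2 : w ∈ e2) (hw3 : w ∈ e3) : e1 = e2 ∨ e1 = e3 ∨ e2 = e3 := by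
  induction p with
  | nil => simp at h1
  | @cons a c b h q ih =>
    rw [SimpleGraph.Walk.cons_isPath_iff] at hp
    rw [SimpleGraph.Walk.edges_cons, List.mem_cons] at h1 h2 h3
    by_cases hwa : w = a
    · subst hwa
      have : ∀ e ∈ q.edges, w ∉ e := fun e he hmem =>
        hp.2 (mem_support_of_mem_edge he hmem)
      rcases h1 with h1 | h1; swap
      · exact absurd hw1 (this _ h1)
      rcases h2 with h2 | h2; swap
      · exact absurd hw2 (this _ h2)
      left; rw [h1, h2]
    · -- w ≠ a; any head-edge containing w must have w = c
      rcases h1 with h1 | h1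
      · rcases h2 with h2 | h2
        · left; rw [h1, h2]
        · rcases h3 with h3 | h3
          · right; left; rw [h1, h3]
          · -- e2, e3 ∈ q.edges with w ∈ both; w = c since w ∈ e1 = s(a,c)
            have hwc : w = c := by
              rcases Sym2.mem_iff.mp (h1 ▸ hw1) with h | h
              · exact absurd h hwa
              · exact h
            subst hwc
            exact Or.inr (Or.inr (edge_at_start_unique hp.1 h2 h3 hw2 hw3))
      · rcases h2 with h2 | h2
        · rcases h3 with h3 | h3
          · right; right; rw [h2, h3]
          · have hwc : w = c := by
              rcases Sym2.mem_iff.mp (h2 ▸ hw2) with h | h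
              · exact absurd h hwa
              · exact h
            subst hwc
            exact Or.inr (Or.inl (edge_at_start_unique hp.1 h1 h3 hw1 hw3))
        · rcases h3 with h3 | h3
          · have hwc : w = c := by
              rcases Sym2.mem_iff.mp (h3 ▸ hw3) with h | h
              · exact absurd h hwa
              · exact h
            subst hwc
            exact Or.inl (edge_at_start_unique hp.1 h1 h2 hw1 hw2)
          · exact ih hp.1 h1 h2 h3

/-- A walk starting outside a set `C` and meeting `C` has an edge entering `C`. -/
lemma exists_entering_edge {C : Set V} {a b : V} {p : G.Walk a b} (ha : a ∉ C)
    {w : V} (hw : w ∈ p.support) (hwC : w ∈ C) :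
    ∃ c d : V, s(c, d) ∈ p.edges ∧ c ∉ C ∧ d ∈ C := by
  induction p with
  | nil =>
    rw [SimpleGraph.Walk.support_nil, List.mem_singleton] at hw
    exact absurd (hw ▸ hwC) ha
  | @cons a c b h q ih =>
    by_cases hc : c ∈ C
    · exact ⟨a, c, by simp, ha, hc⟩
    · rw [SimpleGraph.Walk.support_cons, List.mem_cons] at hw
      rcases hw with rfl | hw
      · exact absurd hwC ha
      · obtain ⟨c', d', hm, hc', hd'⟩ := ih hc hw
        exact ⟨c', d', by simp [hm], hc', hd'⟩

lemma exists_first_edge {a b : V} (p : G.Walk a b) (hab : a ≠ b) :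
    ∃ c, s(a, c) ∈ p.edges ∧ c ∈ p.support := by
  cases p with
  | nil => exact absurd rfl hab
  | @cons a c b h q =>
    exact ⟨c, by simp, by simp [SimpleGraph.Walk.support_cons]⟩

/-- An interior vertex of a path is incident to two distinct edges of the path. -/
lemma two_edges_of_interior {a b : V} {p : G.Walk a b} (hp : p.IsPath)
    {w : V} (hw : w ∈ p.support) (hwa : w ≠ a) (hwb : w ≠ b) :
    ∃ c d, c ≠ d ∧ s(w, c) ∈ p.edges ∧ s(w, d) ∈ p.edges := by
  classical
  have hsplit := p.take_spec hw
  set t := p.takeUntil w hw with ht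
  set d := p.dropUntil w hw with hd
  obtain ⟨c1, hc1, -⟩ := exists_first_edge t.reverse hwa
  rw [SimpleGraph.Walk.edges_reverse, List.mem_reverse] at hc1
  obtain ⟨c2, hc2, -⟩ := exists_first_edge d hwb
  have het : t.edges ⊆ p.edges := p.edges_takeUntil_subset hw
  have hed : d.edges ⊆ p.edges := p.edges_dropUntil_subset hw
  refine ⟨c1, c2, ?_, het hc1, hed hc2⟩
  rintro rfl
  have hnodup : p.edges.Nodup := hp.isTrail.edges_nodup
  rw [← hsplit, SimpleGraph.Walk.edges_append] at hnodup
  exact (List.disjoint_of_nodup_append hnodup) hc1 hc2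

lemma edge_getVert_mem : ∀ {a b : V} (p : G.Walk a b) {i : ℕ}, i < p.length →
    s(p.getVert i, p.getVert (i + 1)) ∈ p.edges := by
  intro a b p
  induction p with
  | nil => intro i hi; simp at hi
  | @cons a c b h q ih =>
    intro i hi
    cases i with
    | zero => simp [SimpleGraph.Walk.getVert_zero]
    | succ n =>
      rw [SimpleGraph.Walk.length_cons, Nat.succ_lt_succ_iff] at hi
      simp only [SimpleGraph.Walk.getVert_cons_succ, SimpleGraph.Walk.edges_cons]
      exact List.mem_cons_of_mem _ (ih hi)

lemma support_getElem_eq_getVert : ∀ {a b : V} (p : G.Walk a b) {i : ℕ}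
    (hi : i < p.support.length), p.support[i] = p.getVert i := by
  intro a b p
  induction p with
  | nil => intro i hi; simp at hi; subst hi; simp
  | @cons a c b h q ih =>
    intro i hi
    cases i with
    | zero => simp
    | succ n =>
      simp only [SimpleGraph.Walk.support_cons] at hi ⊢
      rw [List.getElem_cons_succ, SimpleGraph.Walk.getVert_cons_succ]
      exact ih (by simpa using hi)

lemma IsPath.getVert_ne {a b : V} {p : G.Walk a b} (hp : p.IsPath) {i j : ℕ}
    (hi : i ≤ p.length) (hj : j ≤ p.length) (hij : i ≠ j) :
    p.getVert i ≠ p.getVert j := by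
  have hlen : p.support.length = p.length + 1 := p.length_support
  have hi' : i < p.support.length := by omega
  have hj' : j < p.support.length := by omega
  rw [← support_getElem_eq_getVert p hi', ← support_getElem_eq_getVert p hj']
  intro hcontra
  have := (List.Nodup.getElem_inj_iff hp.support_nodup).mp hcontra
  exact hij this

end Helpers
section Splice

variable {V : Type u} {G : SimpleGraph V}

attribute [local instance] Classical.propDecidable

/-- Replace every traversal of the edge `xy` in a walk by the path `p`. -/
noncomputable def splice {x y : V} (p : G.Walk x y) :
    ∀ {a b : V}, G.Walk a b → G.Walk a b
  | _, _, SimpleGraph.Walk.nil => SimpleGraph.Walk.nil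
  | _, _, @SimpleGraph.Walk.cons _ _ a c b h q =>
      if h1 : a = x ∧ c = y then (p.copy h1.1.symm h1.2.symm).append (splice p q)
      else if h2 : a = y ∧ c = x then
        (p.reverse.copy h2.1.symm h2.2.symm).append (splice p q)
      else SimpleGraph.Walk.cons h (splice p q)

lemma splice_eq_self {x y : V} (p : G.Walk x y) {a b : V} (q : G.Walk a b)
    (h : s(x, y) ∉ q.edges) : splice p q = q := by
  induction q with
  | nil => rfl
  | @cons a c b hadj q ih =>
    rw [SimpleGraph.Walk.edges_cons, List.mem_cons, not_or] at h
    rw [splice]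
    rw [dif_neg, dif_neg]
    · rw [ih h.2]
    · rintro ⟨rfl, rfl⟩; exact h.1 (Sym2.eq_swap)
    · rintro ⟨rfl, rfl⟩; exact h.1 rfl

lemma edges_splice {x y : V} {p : G.Walk x y} (hxyp : s(x, y) ∉ p.edges)
    {a b : V} (q : G.Walk a b) {e : Sym2 V} (he : e ∈ (splice p q).edges) :
    (e ∈ p.edges ∨ e ∈ q.edges) ∧ e ≠ s(x, y) := by
  induction q with
  | nil => rw [splice] at he; simp at he
  | @cons a c b hadj q ih =>
    rw [splice] at he
    split_ifs at he with h1 h2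
    · obtain ⟨rfl, rfl⟩ := h1
      rw [SimpleGraph.Walk.edges_append, List.mem_append, SimpleGraph.Walk.edges_copy] at he
      rcases he with he | he
      · exact ⟨Or.inl he, fun hc => hxyp (hc ▸ he)⟩
      · obtain ⟨h', hne⟩ := ih he
        exact ⟨h'.imp id (by simp +contextual), hne⟩
    · obtain ⟨rfl, rfl⟩ := h2
      rw [SimpleGraph.Walk.edges_append, List.mem_append, SimpleGraph.Walk.edges_copy,
        SimpleGraph.Walk.edges_reverse, List.mem_reverse] at he
      rcases he with he | he
      · exact ⟨Or.inl he, fun hc => hxyp (hc ▸ he)⟩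
      · obtain ⟨h', hne⟩ := ih he
        exact ⟨h'.imp id (by simp +contextual), hne⟩
    · rw [SimpleGraph.Walk.edges_cons, List.mem_cons] at he
      rcases he with rfl | he
      · refine ⟨Or.inr (by simp), ?_⟩
        intro hc
        rw [Sym2.eq_iff] at hc
        rcases hc with ⟨rfl, rfl⟩ | ⟨rfl, rfl⟩
        · exact h1 ⟨rfl, rfl⟩
        · exact h2 ⟨rfl, rfl⟩
      · obtain ⟨h', hne⟩ := ih he
        exact ⟨h'.imp id (by simp +contextual), hne⟩

lemma support_splice {x y : V} {p : G.Walk x y} {a b : V} (q : G.Walk a b) {w : V}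
    (hw : w ∈ (splice p q).support) :
    w ∈ q.support ∨ (w ∈ p.support ∧ s(x, y) ∈ q.edges) := by
  induction q with
  | nil => rw [splice] at hw; exact Or.inl hw
  | @cons a c b hadj q ih =>
    rw [splice] at hw
    split_ifs at hw with h1 h2
    · obtain ⟨rfl, rfl⟩ := h1
      rw [SimpleGraph.Walk.mem_support_append_iff, SimpleGraph.Walk.support_copy] at hw
      rcases hw with hw | hw
      · exact Or.inr ⟨hw, by simp⟩
      · rcases ih hw with hw | ⟨hw1, hw2⟩
        · exact Or.inl (by simp [SimpleGraph.Walk.support_cons, hw])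
        · exact Or.inr ⟨hw1, by simp [hw2]⟩
    · obtain ⟨rfl, rfl⟩ := h2
      rw [SimpleGraph.Walk.mem_support_append_iff, SimpleGraph.Walk.support_copy,
        SimpleGraph.Walk.support_reverse, List.mem_reverse] at hw
      rcases hw with hw | hw
      · exact Or.inr ⟨hw, by simp [Sym2.eq_swap]⟩
      · rcases ih hw with hw | ⟨hw1, hw2⟩
        · exact Or.inl (by simp [SimpleGraph.Walk.support_cons, hw])
        · exact Or.inr ⟨hw1, by simp [hw2]⟩
    · rw [SimpleGraph.Walk.support_cons, List.mem_cons] at hw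
      rcases hw with rfl | hw
      · exact Or.inl (SimpleGraph.Walk.start_mem_support _)
      · rcases ih hw with hw | ⟨hw1, hw2⟩
        · exact Or.inl (by simp [SimpleGraph.Walk.support_cons, hw])
        · exact Or.inr ⟨hw1, by simp [hw2]⟩

lemma isPath_splice {x y : V} {p : G.Walk x y} (hpp : p.IsPath) (hxny : x ≠ y)
    {a b : V} {q : G.Walk a b} (hq : q.IsPath)
    (hdisj : ∀ w ∈ q.support, w ∈ p.support → w = x ∨ w = y) :
    (splice p q).IsPath := by
  induction q with
  | nil => rw [splice]; exact SimpleGraph.Walk.IsPath.nil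
  | @cons a c b hadj q ih =>
    rw [SimpleGraph.Walk.cons_isPath_iff] at hq
    have hd' : ∀ w ∈ q.support, w ∈ p.support → w = x ∨ w = y := fun w hw hwp =>
      hdisj w (by simp [SimpleGraph.Walk.support_cons, hw]) hwp
    rw [splice]
    split_ifs with h1 h2
    · obtain ⟨rfl, rfl⟩ := h1
      have hq' : s(a, c) ∉ q.edges := fun hc =>
        hq.2 (q.fst_mem_support_of_mem_edges hc)
      rw [splice_eq_self p q hq']
      rw [SimpleGraph.Walk.isPath_def, SimpleGraph.Walk.support_append]
      rw [List.nodup_append]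
      refine ⟨by simpa using hpp.support_nodup, ?_, ?_⟩
      · exact (List.nodup_cons.mp (q.support_eq_cons ▸ hq.1.support_nodup)).2
      · intro w hwp b hwt hwb; subst hwb
        have hwq : w ∈ q.support := q.support_eq_cons ▸ List.mem_cons_of_mem _ hwt
        rw [SimpleGraph.Walk.support_copy] at hwp
        rcases hd' w hwq hwp with rfl | rfl
        · exact hq.2 hwq
        · exact (List.nodup_cons.mp (q.support_eq_cons ▸ hq.1.support_nodup)).1 hwt
    · obtain ⟨rfl, rfl⟩ := h2
      have hq' : s(c, a) ∉ q.edges := fun hc =>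
        hq.2 (q.snd_mem_support_of_mem_edges hc)
      rw [splice_eq_self p q hq']
      rw [SimpleGraph.Walk.isPath_def, SimpleGraph.Walk.support_append]
      rw [List.nodup_append]
      refine ⟨by simpa using hpp.reverse.support_nodup, ?_, ?_⟩
      · exact (List.nodup_cons.mp (q.support_eq_cons ▸ hq.1.support_nodup)).2
      · intro w hwp b hwt hwb; subst hwb
        have hwq : w ∈ q.support := q.support_eq_cons ▸ List.mem_cons_of_mem _ hwt
        rw [SimpleGraph.Walk.support_copy, SimpleGraph.Walk.support_reverse,
          List.mem_reverse] at hwp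
        rcases hd' w hwq hwp with rfl | rfl
        · exact (List.nodup_cons.mp (q.support_eq_cons ▸ hq.1.support_nodup)).1 hwt
        · exact hq.2 hwq
    · rw [SimpleGraph.Walk.cons_isPath_iff]
      refine ⟨ih hq.1 hd', fun hc => ?_⟩
      rcases support_splice q hc with hc' | ⟨hc1, hc2⟩
      · exact hq.2 hc'
      · rcases hdisj a (by simp) hc1 with rfl | rfl
        · exact hq.2 (q.fst_mem_support_of_mem_edges hc2)
        · exact hq.2 (q.snd_mem_support_of_mem_edges hc2)

end Splice
section Flat

variable {V : Type u} {G : SimpleGraph V} {x y : V}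

lemma flat_reverse {p : G.Walk x y} (hp : IsFlatPath G p) : IsFlatPath G p.reverse :=
  ⟨hp.1.reverse, by simpa using hp.2.1,
    fun v hv hvy hvx => hp.2.2 v (by simpa [SimpleGraph.Walk.support_reverse] using hv) hvx hvy⟩

lemma flat_getVert_mem_support (p : G.Walk x y) {i : ℕ} (hi : i ≤ p.length) :
    p.getVert i ∈ p.support :=
  SimpleGraph.Walk.mem_support_iff_exists_getVert.mpr ⟨i, rfl, hi⟩

lemma flat_nbhd {p : G.Walk x y} (hp : IsFlatPath G p) {i : ℕ}
    (hi0 : i ≠ 0) (hik : i ≠ p.length) (hile : i ≤ p.length) :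
    G.neighborSet (p.getVert i) = {p.getVert (i - 1), p.getVert (i + 1)} := by
  have hlt : i < p.length := lt_of_le_of_ne hile hik
  have h1 : G.Adj (p.getVert (i - 1)) (p.getVert i) := by
    have := p.adj_getVert_succ (i := i - 1) (by omega)
    rwa [show i - 1 + 1 = i by omega] at this
  have h2 : G.Adj (p.getVert i) (p.getVert (i + 1)) := p.adj_getVert_succ hlt
  have hne : p.getVert (i - 1) ≠ p.getVert (i + 1) :=
    IsPath.getVert_ne hp.1 (by omega) (by omega) (by omega)
  have hcard : (G.neighborSet (p.getVert i)).ncard = 2 :=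
    hp.2.2 _ (flat_getVert_mem_support p hile)
      (by simpa using IsPath.getVert_ne hp.1 hile (by omega) hi0)
      (by simpa using IsPath.getVert_ne hp.1 hile le_rfl hik)
  have hsub : {p.getVert (i - 1), p.getVert (i + 1)} ⊆ G.neighborSet (p.getVert i) := by
    rintro w (rfl | rfl)
    · exact h1.symm
    · exact h2
  have hfin : (G.neighborSet (p.getVert i)).Finite := by
    by_contra hinf
    rw [Set.Infinite.ncard hinf] at hcard
    omega
  refine (Set.eq_of_subset_of_ncard_le hsub ?_ hfin).symm
  rw [hcard, Set.ncard_pair hne]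

lemma force_edges {p : G.Walk x y} (hp : IsFlatPath G p) {s t : V} {q : G.Walk s t}
    (hq : q.IsPath) {i : ℕ} (hi0 : i ≠ 0) (hik : i ≠ p.length) (hile : i ≤ p.length)
    (hmem : p.getVert i ∈ q.support) (hvs : p.getVert i ≠ s) (hvt : p.getVert i ≠ t) :
    s(p.getVert i, p.getVert (i - 1)) ∈ q.edges ∧
      s(p.getVert i, p.getVert (i + 1)) ∈ q.edges := by
  obtain ⟨c, d, hcd, hc, hd⟩ := two_edges_of_interior hq hmem hvs hvt
  have hcN : c ∈ G.neighborSet (p.getVert i) := q.adj_of_mem_edges hc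
  have hdN : d ∈ G.neighborSet (p.getVert i) := q.adj_of_mem_edges hd
  rw [flat_nbhd hp hi0 hik hile] at hcN hdN
  rcases hcN with rfl | rfl <;> rcases hdN with rfl | rfl
  · exact absurd rfl hcd
  · exact ⟨hc, hd⟩
  · exact ⟨hd, hc⟩
  · exact absurd rfl hcd

lemma propdown {p : G.Walk x y} (hp : IsFlatPath G p) {s t : V} {q : G.Walk s t}
    (hq : q.IsPath) :
    ∀ i, i < p.length → (∀ j, j ≠ 0 → j ≤ i → p.getVert j ≠ s ∧ p.getVert j ≠ t) →
      s(p.getVert i, p.getVert (i + 1)) ∈ q.edges →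
      ∀ j ≤ i, s(p.getVert j, p.getVert (j + 1)) ∈ q.edges := by
  intro i
  induction i with
  | zero =>
    intro _ _ hseed j hj
    interval_cases j
    exact hseed
  | succ n ih =>
    intro hlt hint hseed j hj
    rcases Nat.lt_or_ge j (n + 1) with hj' | hj'
    · have hmem : p.getVert (n + 1) ∈ q.support :=
        q.fst_mem_support_of_mem_edges hseed
      have hforce := force_edges hp hq (i := n + 1) (by omega) (by omega) (by omega) hmem
        (hint (n + 1) (by omega) le_rfl).1 (hint (n + 1) (by omega) le_rfl).2
      have hseed' : s(p.getVert n, p.getVert (n + 1)) ∈ q.edges := by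
        have := hforce.1
        rw [show n + 1 - 1 = n by omega] at this
        rwa [Sym2.eq_swap] at this
      exact ih (by omega) (fun j hj0 hjn => hint j hj0 (by omega)) hseed' j (by omega)
    · have : j = n + 1 := by omega
      subst this
      exact hseed

lemma reach_start {p : G.Walk x y} (hp : IsFlatPath G p) {s t : V} {q : G.Walk s t}
    (hq : q.IsPath) {m : ℕ} (hm1 : m ≠ 0) (hmk : m ≤ p.length)
    (hseed : s(p.getVert (m - 1), p.getVert m) ∈ q.edges)
    (hint : ∀ j, j ≠ 0 → j < m → p.getVert j ≠ s ∧ p.getVert j ≠ t) :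
    ∀ j < m, s(p.getVert j, p.getVert (j + 1)) ∈ q.edges := by
  intro j hj
  have hseed' : s(p.getVert (m - 1), p.getVert (m - 1 + 1)) ∈ q.edges := by
    rwa [show m - 1 + 1 = m by omega]
  exact propdown hp hq (m - 1) (by omega)
    (fun j hj0 hjm => hint j hj0 (by omega)) hseed' j (by omega)

lemma reach_end {p : G.Walk x y} (hp : IsFlatPath G p) {s t : V} {q : G.Walk s t}
    (hq : q.IsPath) {m : ℕ} (hmk : m ≠ p.length) (hmle : m ≤ p.length)
    (hseed : s(p.getVert m, p.getVert (m + 1)) ∈ q.edges)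
    (hint : ∀ j, m < j → j ≠ p.length → j ≤ p.length → p.getVert j ≠ s ∧ p.getVert j ≠ t) :
    ∀ j, m ≤ j → j < p.length → s(p.getVert j, p.getVert (j + 1)) ∈ q.edges := by
  intro j hmj hj
  have hrev := flat_reverse hp
  have hlen : p.reverse.length = p.length := SimpleGraph.Walk.length_reverse p
  have key := reach_start hrev hq (m := p.length - m) (by omega) (by omega) ?_ ?_
    (p.length - j - 1) (by omega)
  · rw [SimpleGraph.Walk.getVert_reverse, SimpleGraph.Walk.getVert_reverse,
      show p.length - (p.length - j - 1) = j + 1 by omega,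
      show p.length - (p.length - j - 1 + 1) = j by omega, Sym2.eq_swap] at key
    exact key
  · rw [SimpleGraph.Walk.getVert_reverse, SimpleGraph.Walk.getVert_reverse,
      show p.length - (p.length - m - 1) = m + 1 by omega,
      show p.length - (p.length - m) = m by omega, Sym2.eq_swap]
    exact hseed
  · intro j' hj'0 hj'm
    rw [SimpleGraph.Walk.getVert_reverse]
    exact hint (p.length - j') (by omega) (by omega) (by omega)

lemma all_edges_of_meet {p : G.Walk x y} (hp : IsFlatPath G p) {s t : V} {q : G.Walk s t}
    (hq : q.IsPath) {i0 : ℕ} (hi00 : i0 ≠ 0) (hi0k : i0 ≠ p.length) (hi0le : i0 ≤ p.length)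
    (hmem : p.getVert i0 ∈ q.support)
    (hint : ∀ j, j ≠ 0 → j ≠ p.length → j ≤ p.length → p.getVert j ≠ s ∧ p.getVert j ≠ t) :
    ∀ j < p.length, s(p.getVert j, p.getVert (j + 1)) ∈ q.edges := by
  have hi0st := hint i0 hi00 hi0k hi0le
  obtain ⟨hdownseed, hupseed⟩ := force_edges hp hq hi00 hi0k hi0le hmem hi0st.1 hi0st.2
  intro j hj
  rcases Nat.lt_or_ge j i0 with hj' | hj'
  · refine reach_start hp hq hi00 hi0le ?_ (fun j hj0 hjm => hint j hj0 (by omega) (by omega))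
      j hj'
    rwa [Sym2.eq_swap] at hdownseed
  · exact reach_end hp hq hi0k hi0le hupseed
      (fun j hj0 hjk hjl => hint j (by omega) hjk hjl) j hj' hj

/-- A path cannot contain all the edges of the cycle `xy + p`. -/
lemma no_cycle_in_path {p : G.Walk x y} (hp : IsFlatPath G p) (hadj : G.Adj x y)
    {s t : V} {q : G.Walk s t} (hq : q.IsPath) (hxy : s(x, y) ∈ q.edges)
    (hall : ∀ j < p.length, s(p.getVert j, p.getVert (j + 1)) ∈ q.edges) : False := by
  set C : Set V := {w | ∃ i, i ≤ p.length ∧ p.getVert i = w} with hC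
  have hk2 : 2 ≤ p.length := hp.2.1
  have hgx : p.getVert 0 = x := p.getVert_zero
  have hgy : p.getVert p.length = y := p.getVert_length
  have hedges2 : ∀ w ∈ C, ∃ e1 e2 : Sym2 V, e1 ≠ e2 ∧ e1 ∈ q.edges ∧ e2 ∈ q.edges ∧
      w ∈ e1 ∧ w ∈ e2 ∧ (∀ z ∈ e1, z ∈ C) ∧ (∀ z ∈ e2, z ∈ C) := by
    rintro w ⟨i, hile, rfl⟩
    have hCmem : ∀ j, j ≤ p.length → p.getVert j ∈ C := fun j hj => ⟨j, hj, rfl⟩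
    by_cases hi0 : i = 0
    · subst hi0
      refine ⟨s(x, y), s(p.getVert 0, p.getVert 1), ?_, hxy, hall 0 (by omega), ?_, ?_, ?_, ?_⟩
      · intro hcon
        rw [hgx, Sym2.eq_iff] at hcon
        rcases hcon with ⟨-, h⟩ | ⟨h1, h2⟩
        · exact IsPath.getVert_ne hp.1 (le_refl p.length) (by omega) (by omega) (hgy.trans h)
        · exact hadj.ne h2.symm
      · rw [hgx]; exact Sym2.mem_mk_left x y
      · exact Sym2.mem_mk_left _ _
      · rintro z hz
        rcases Sym2.mem_iff.mp hz with rfl | rfl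
        · exact hgx ▸ hCmem 0 (by omega)
        · exact hgy ▸ hCmem p.length le_rfl
      · rintro z hz
        rcases Sym2.mem_iff.mp hz with rfl | rfl
        · exact hCmem 0 (by omega)
        · exact hCmem 1 (by omega)
    · by_cases hik : i = p.length
      · subst hik
        refine ⟨s(x, y), s(p.getVert (p.length - 1), p.getVert p.length), ?_, hxy, ?_, ?_, ?_, ?_, ?_⟩
        · intro hcon
          rw [hgy, Sym2.eq_iff] at hcon
          rcases hcon with ⟨h, -⟩ | ⟨h1, h2⟩
          · exact IsPath.getVert_ne hp.1 (by omega : (0:ℕ) ≤ p.length) (by omega) (by omega)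
              (hgx.trans h)
          · exact hadj.ne h1
        · have := hall (p.length - 1) (by omega)
          rwa [show p.length - 1 + 1 = p.length by omega] at this
        · rw [hgy]; exact Sym2.mem_mk_right x y
        · exact Sym2.mem_mk_right _ _
        · rintro z hz
          rcases Sym2.mem_iff.mp hz with rfl | rfl
          · exact hgx ▸ hCmem 0 (by omega)
          · exact hgy ▸ hCmem p.length le_rfl
        · rintro z hz
          rcases Sym2.mem_iff.mp hz with rfl | rfl
          · exact hCmem (p.length - 1) (by omega)
          · exact hCmem p.length le_rfl
      · refine ⟨s(p.getVert (i - 1), p.getVert i), s(p.getVert i, p.getVert (i + 1)), ?_, ?_,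
          hall i (by omega), Sym2.mem_mk_right _ _, Sym2.mem_mk_left _ _, ?_, ?_⟩
        · intro hcon
          rw [Sym2.eq_iff] at hcon
          rcases hcon with ⟨h, -⟩ | ⟨h, -⟩
          · exact IsPath.getVert_ne hp.1 (by omega) (by omega) (by omega) h
          · exact IsPath.getVert_ne hp.1 (by omega) (by omega) (by omega) h
        · have := hall (i - 1) (by omega)
          rwa [show i - 1 + 1 = i by omega] at this
        · rintro z hz
          rcases Sym2.mem_iff.mp hz with rfl | rfl
          · exact hCmem (i - 1) (by omega)
          · exact hCmem i (by omega)
        · rintro z hz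
          rcases Sym2.mem_iff.mp hz with rfl | rfl
          · exact hCmem i (by omega)
          · exact hCmem (i + 1) (by omega)
  have hsC : s ∉ C := by
    intro hsC
    obtain ⟨e1, e2, hne, he1, he2, hw1, hw2, -, -⟩ := hedges2 s hsC
    exact hne (edge_at_start_unique hq he1 he2 hw1 hw2)
  have htC : t ∉ C := by
    intro htC
    obtain ⟨e1, e2, hne, he1, he2, hw1, hw2, -, -⟩ := hedges2 t htC
    exact hne (edge_at_end_unique hq he1 he2 hw1 hw2)
  have hxC : x ∈ C := ⟨0, by omega, hgx⟩
  have hxsup : x ∈ q.support := q.fst_mem_support_of_mem_edges hxy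
  obtain ⟨c, d, hcd, hcC, hdC⟩ := exists_entering_edge hsC hxsup hxC
  obtain ⟨e1, e2, hne, he1, he2, hw1, hw2, hall1, hall2⟩ := hedges2 d hdC
  have hd1 : d ∈ s(c, d) := Sym2.mem_mk_right _ _
  rcases edges_at_vertex_le_two hq hcd he1 he2 hd1 hw1 hw2 with h | h | h
  · exact hcC (hall1 c (h ▸ Sym2.mem_mk_left _ _))
  · exact hcC (hall2 c (h ▸ Sym2.mem_mk_left _ _))
  · exact hne h

end Flat
section Normalize

variable {V : Type u} {W : Type*} {G : SimpleGraph V} {H : SimpleGraph W}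

attribute [local instance] Classical.propDecidable

/-- A choice of path for each edge which is reversal-compatible. -/
noncomputable def normPath (D : SubdivisionIn G H) (g : W → ℕ) ⦃u v : W⦄ (h : H.Adj u v) :
    G.Walk (D.f u) (D.f v) :=
  if g u < g v then D.path h else (D.path h.symm).reverse

lemma normPath_cases (D : SubdivisionIn G H) (g : W → ℕ) ⦃u v : W⦄ (h : H.Adj u v) :
    normPath D g h = D.path h ∨ normPath D g h = (D.path h.symm).reverse := by
  unfold normPath; split_ifs <;> simp

/-- The normalized subdivision. -/
noncomputable def SubdivisionIn.normalize (D : SubdivisionIn G H) (g : W → ℕ) :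
    SubdivisionIn G H where
  f := D.f
  inj := D.inj
  path := normPath D g
  isPath u v h := by
    rcases normPath_cases D g h with he | he <;> rw [he]
    · exact D.isPath h
    · exact (D.isPath h.symm).reverse
  internal_not_branch u v h w hw hz := by
    rcases normPath_cases D g h with he | he <;> rw [he] at hw
    · exact D.internal_not_branch h w hw hz
    · rw [SimpleGraph.Walk.support_reverse, List.mem_reverse] at hw
      exact (D.internal_not_branch h.symm w hw hz).symm
  internal_disjoint u v u' v' h h' hne w hw hw' := by
    have hne2 : s(v, u) ≠ s(u', v') := by rwa [Sym2.eq_swap]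
    rcases normPath_cases D g h with he | he <;> rw [he] at hw <;>
      rcases normPath_cases D g h' with he' | he' <;> rw [he'] at hw'
    · exact D.internal_disjoint h h' hne w hw hw'
    · rw [SimpleGraph.Walk.support_reverse, List.mem_reverse] at hw'
      exact D.internal_disjoint h h'.symm (by rwa [Sym2.eq_swap (a := u') (b := v')] at hne)
        w hw hw'
    · rw [SimpleGraph.Walk.support_reverse, List.mem_reverse] at hw
      exact (D.internal_disjoint h.symm h' hne2 w hw hw').symm
    · rw [SimpleGraph.Walk.support_reverse, List.mem_reverse] at hw hw'
      exact (D.internal_disjoint h.symm h'.symm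
        (by rwa [Sym2.eq_swap (a := u') (b := v')] at hne2) w hw hw').symm

lemma normalize_compat (D : SubdivisionIn G H) (g : W → ℕ) (hg : Function.Injective g)
    ⦃u v u' v' : W⦄ (h : H.Adj u v) (h' : H.Adj u' v') (he : s(u, v) = s(u', v')) :
    (∀ w, w ∈ ((D.normalize g).path h').support ↔ w ∈ ((D.normalize g).path h).support) ∧
    (∀ e, e ∈ ((D.normalize g).path h').edges ↔ e ∈ ((D.normalize g).path h).edges) := by
  rw [Sym2.eq_iff] at he
  rcases he with ⟨rfl, rfl⟩ | ⟨rfl, rfl⟩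
  · exact ⟨fun w => Iff.rfl, fun e => Iff.rfl⟩
  · have key : (D.normalize g).path h' = ((D.normalize g).path h).reverse := by
      show normPath D g h' = (normPath D g h).reverse
      unfold normPath
      rcases lt_trichotomy (g u) (g v) with hlt | heq | hlt
      · have h1 : ¬ g v < g u := by omega
        rw [if_pos hlt, if_neg h1]
      · exact absurd (hg heq) h.ne
      · have h1 : ¬ g u < g v := by omega
        rw [if_neg h1, if_pos hlt, SimpleGraph.Walk.reverse_reverse]
    rw [key]
    constructor
    · intro w
      rw [SimpleGraph.Walk.support_reverse, List.mem_reverse]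
    · intro e
      rw [SimpleGraph.Walk.edges_reverse, List.mem_reverse]

end Normalize
section Main

variable {V : Type u} {G : SimpleGraph V} {x y : V}

lemma xy_not_mem_flat_edges {p : G.Walk x y} (hp : IsFlatPath G p) (hxny : x ≠ y) :
    s(x, y) ∉ p.edges := by
  cases p with
  | nil => simp
  | @cons a c b h q =>
    intro hmem
    rw [SimpleGraph.Walk.edges_cons, List.mem_cons] at hmem
    have hcons := hp.1
    rw [SimpleGraph.Walk.cons_isPath_iff] at hcons
    rcases hmem with hmem | hmem
    · rw [Sym2.eq_iff] at hmem
      rcases hmem with ⟨-, rfl⟩ | ⟨rfl, rfl⟩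
      · have : q = SimpleGraph.Walk.nil := SimpleGraph.Walk.isPath_iff_eq_nil.mp hcons.1
        have hlen := hp.2.1
        rw [SimpleGraph.Walk.length_cons, this] at hlen
        simp at hlen
      · exact hxny rfl
    · exact hcons.2 (q.fst_mem_support_of_mem_edges hmem)

/-- `z` has three distinct neighbours in `H`. -/
abbrev ThreeNbrs {W : Type*} (H : SimpleGraph W) (z : W) : Prop :=
  ∃ c1 c2 c3, c1 ≠ c2 ∧ c1 ≠ c3 ∧ c2 ≠ c3 ∧ H.Adj z c1 ∧ H.Adj z c2 ∧ H.Adj z c3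

lemma contains_subdivision_deleteEdge {W : Type*} [Countable W] {H : SimpleGraph W}
    (hspec : ∀ z : W, ThreeNbrs H z ∨ ∃ b1 b2, b1 ≠ b2 ∧ ¬ H.Adj b1 b2 ∧ H.Adj z b1 ∧
      H.Adj z b2 ∧ ThreeNbrs H b1 ∧ ThreeNbrs H b2)
    (hc : Compliant G x y) (hsub : ContainsSubdivision G H) :
    ContainsSubdivision (G.deleteEdges {s(x, y)}) H := by
  classical
  obtain ⟨hadj, p, hp⟩ := hc
  obtain ⟨g, hg⟩ := Countable.exists_injective_nat W
  obtain ⟨D0⟩ := hsub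
  let D : SubdivisionIn G H := D0.normalize g
  have hcompat : ∀ ⦃u v u' v' : W⦄ (h : H.Adj u v) (h' : H.Adj u' v'), s(u, v) = s(u', v') →
      (∀ w, w ∈ (D.path h').support ↔ w ∈ (D.path h).support) ∧
      (∀ e, e ∈ (D.path h').edges ↔ e ∈ (D.path h).edges) := normalize_compat D0 g hg
  have hxny : x ≠ y := hadj.ne
  have hpedge : s(x, y) ∉ p.edges := xy_not_mem_flat_edges hp hxny
  have hGedge : ∀ e ∈ G.edgeSet, e ≠ s(x, y) → e ∈ (G.deleteEdges {s(x, y)}).edgeSet := by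
    intro e he hne
    rw [SimpleGraph.edgeSet_deleteEdges]
    exact ⟨he, by simpa using hne⟩
  have hnbr : ∀ z : W, ∃ c, H.Adj z c := by
    intro z
    rcases hspec z with ⟨c1, c2, c3, _, _, _, h1, -, -⟩ | ⟨b1, b2, _, _, h1, -⟩
    · exact ⟨c1, h1⟩
    · exact ⟨b1, h1⟩
  have hfne : ∀ {u v : W}, u ≠ v → D.f u ≠ D.f v := fun h he => h (D.inj he)
  -- second vertex of the path corresponding to an edge of H
  have hsecond : ∀ ⦃z c : W⦄ (h : H.Adj z c), ∃ n, s(D.f z, n) ∈ (D.path h).edges ∧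
      n ∈ (D.path h).support ∧ n ≠ D.f z := by
    intro z c h
    obtain ⟨n, hn, hns⟩ := exists_first_edge (D.path h) (hfne h.ne)
    exact ⟨n, hn, hns, ((D.path h).adj_of_mem_edges hn).ne'⟩
  have hsecond_ne : ∀ ⦃z c c' : W⦄ (h : H.Adj z c) (h' : H.Adj z c'), c ≠ c' →
      ∀ {n n' : V}, s(D.f z, n) ∈ (D.path h).edges → n ∈ (D.path h).support → n ≠ D.f z →
        s(D.f z, n') ∈ (D.path h').edges → n' ∈ (D.path h').support → n' ≠ D.f z →
        n ≠ n' := by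
    intro z c c' h h' hcc' n n' _ hns hnz _ hn's hn'z heq
    subst heq
    have hne : s(z, c) ≠ s(z, c') := by
      intro hcon
      rcases Sym2.eq_iff.mp hcon with ⟨-, h1⟩ | ⟨h1, h2⟩
      · exact hcc' h1
      · exact h'.ne h1
    have h1 := D.internal_disjoint h h' hne n hns hn's
    have h2 := D.internal_disjoint h' h hne.symm n hn's hns
    rcases h1 with h1 | h1
    · exact hnz h1
    rcases h2 with h2 | h2
    · exact hnz h2
    · exact hcc' (D.inj (h1.symm.trans h2))
  have hnotins : ∀ z : W, ThreeNbrs H z → ∀ i, i ≠ 0 → i ≠ p.length → i ≤ p.length →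
      D.f z ≠ p.getVert i := by
    rintro z ⟨c1, c2, c3, h12, h13, h23, hc1, hc2, hc3⟩ i hi0 hik hile heq
    obtain ⟨n1, hn1e, hn1s, hn1z⟩ := hsecond hc1
    obtain ⟨n2, hn2e, hn2s, hn2z⟩ := hsecond hc2
    obtain ⟨n3, hn3e, hn3s, hn3z⟩ := hsecond hc3
    have h12' := hsecond_ne hc1 hc2 h12 hn1e hn1s hn1z hn2e hn2s hn2z
    have h13' := hsecond_ne hc1 hc3 h13 hn1e hn1s hn1z hn3e hn3s hn3z
    have h23' := hsecond_ne hc2 hc3 h23 hn2e hn2s hn2z hn3e hn3s hn3z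
    have hm1 : n1 ∈ G.neighborSet (p.getVert i) := by
      rw [← heq]; exact ((D.path hc1).adj_of_mem_edges hn1e)
    have hm2 : n2 ∈ G.neighborSet (p.getVert i) := by
      rw [← heq]; exact ((D.path hc2).adj_of_mem_edges hn2e)
    have hm3 : n3 ∈ G.neighborSet (p.getVert i) := by
      rw [← heq]; exact ((D.path hc3).adj_of_mem_edges hn3e)
    rw [flat_nbhd hp hi0 hik hile, Set.mem_insert_iff, Set.mem_singleton_iff] at hm1 hm2 hm3
    rcases hm1 with h1 | h1 <;> rcases hm2 with h2 | h2 <;> rcases hm3 with h3 | h3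
    · exact h12' (h1.trans h2.symm)
    · exact h12' (h1.trans h2.symm)
    · exact h13' (h1.trans h3.symm)
    · exact h23' (h2.trans h3.symm)
    · exact h23' (h2.trans h3.symm)
    · exact h13' (h1.trans h3.symm)
    · exact h12' (h1.trans h2.symm)
    · exact h12' (h1.trans h2.symm)
  have hxy_endpoints : ∀ ⦃u v u' v' : W⦄ (h : H.Adj u v) (h' : H.Adj u' v'),
      s(u, v) ≠ s(u', v') → x ∈ (D.path h).support → y ∈ (D.path h).support →
      x ∈ (D.path h').support → y ∈ (D.path h').support → False := by
    intro u v u' v' h h' hne hx1 hy1 hx2 hy2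
    have ha1 := D.internal_disjoint h h' hne x hx1 hx2
    have hb1 := D.internal_disjoint h h' hne y hy1 hy2
    have ha2 := D.internal_disjoint h' h hne.symm x hx2 hx1
    have hb2 := D.internal_disjoint h' h hne.symm y hy2 hy1
    apply hne
    rcases ha1 with ha1 | ha1 <;> rcases hb1 with hb1 | hb1
    · exact absurd (ha1.trans hb1.symm) hxny
    · rcases ha2 with ha2 | ha2 <;> rcases hb2 with hb2 | hb2
      · exact absurd (ha2.trans hb2.symm) hxny
      · rw [D.inj (ha1.symm.trans ha2), D.inj (hb1.symm.trans hb2)]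
      · rw [D.inj (ha1.symm.trans ha2), D.inj (hb1.symm.trans hb2)]
        exact Sym2.eq_swap
      · exact absurd (ha2.trans hb2.symm) hxny
    · rcases ha2 with ha2 | ha2 <;> rcases hb2 with hb2 | hb2
      · exact absurd (ha2.trans hb2.symm) hxny
      · rw [D.inj (ha1.symm.trans ha2), D.inj (hb1.symm.trans hb2)]
        exact Sym2.eq_swap
      · rw [D.inj (ha1.symm.trans ha2), D.inj (hb1.symm.trans hb2)]
      · exact absurd (ha2.trans hb2.symm) hxny
    · exact absurd (ha1.trans hb1.symm) hxny
  by_cases hE : ∃ (u : W) (v : W) (h : H.Adj u v), s(x, y) ∈ (D.path h).edges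
  swap
  · -- no path uses the edge xy; transfer directly
    push_neg at hE
    have hT : ∀ ⦃u v : W⦄ (h : H.Adj u v), ∀ e ∈ (D.path h).edges,
        e ∈ (G.deleteEdges {s(x, y)}).edgeSet := by
      intro u v h e he
      refine hGedge e ((D.path h).edges_subset_edgeSet he) (fun hcon => ?_)
      exact hE u v h (hcon ▸ he)
    exact ⟨⟨D.f, D.inj, fun u v h => (D.path h).transfer _ (hT h),
      fun u v h => (D.isPath h).transfer _,
      fun u v h w hw hz => D.internal_not_branch h w
        (by rwa [SimpleGraph.Walk.support_transfer] at hw) hz,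
      fun u v u' v' h h' hne w hw hw' => D.internal_disjoint h h' hne w
        (by rwa [SimpleGraph.Walk.support_transfer] at hw)
        (by rwa [SimpleGraph.Walk.support_transfer] at hw')⟩⟩
  obtain ⟨u0, v0, h0, hx0⟩ := hE
  have hxs0 : x ∈ (D.path h0).support := (D.path h0).fst_mem_support_of_mem_edges hx0
  have hys0 : y ∈ (D.path h0).support := (D.path h0).snd_mem_support_of_mem_edges hx0
  by_cases hS : ∀ (u v : W) (h : H.Adj u v), ∀ w ∈ (D.path h).support,
      w ∈ p.support → w = x ∨ w = y
  · -- splice construction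
    have hT : ∀ ⦃u v : W⦄ (h : H.Adj u v), ∀ e ∈ (splice p (D.path h)).edges,
        e ∈ (G.deleteEdges {s(x, y)}).edgeSet := by
      intro u v h e he
      obtain ⟨hor, hne⟩ := edges_splice hpedge _ he
      refine hGedge e ?_ hne
      rcases hor with hor | hor
      · exact p.edges_subset_edgeSet hor
      · exact (D.path h).edges_subset_edgeSet hor
    have hbranch_xy : ∀ z : W, D.f z ∈ p.support → D.f z = x ∨ D.f z = y := by
      intro z hzp
      obtain ⟨c, hcz⟩ := hnbr z
      exact hS z c hcz (D.f z) ((D.path hcz).start_mem_support) hzp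
    refine ⟨⟨D.f, D.inj, fun u v h => (splice p (D.path h)).transfer _ (hT h),
      fun u v h => (isPath_splice hp.1 hxny (D.isPath h)
        (fun w hw hwp => hS u v h w hw hwp)).transfer _,
      ?_, ?_⟩⟩
    · intro u v h w hw hz
      rw [SimpleGraph.Walk.support_transfer] at hw
      rcases support_splice _ hw with hw' | ⟨hwp, hxyq⟩
      · exact D.internal_not_branch h w hw' hz
      · obtain ⟨z, rfl⟩ := hz
        have hwq : D.f z ∈ (D.path h).support := by
          rcases hbranch_xy z hwp with he | he <;> rw [he]
          · exact (D.path h).fst_mem_support_of_mem_edges hxyq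
          · exact (D.path h).snd_mem_support_of_mem_edges hxyq
        exact D.internal_not_branch h _ hwq ⟨z, rfl⟩
    · intro u v u' v' h h' hne w hw hw'
      rw [SimpleGraph.Walk.support_transfer] at hw hw'
      rcases support_splice _ hw with hw1 | ⟨hwp1, hxyq1⟩ <;>
        rcases support_splice _ hw' with hw2 | ⟨hwp2, hxyq2⟩
      · exact D.internal_disjoint h h' hne w hw1 hw2
      · have hw2' : w ∈ (D.path h').support := by
          rcases hS u v h w hw1 hwp2 with he | he <;> rw [he]
          · exact (D.path h').fst_mem_support_of_mem_edges hxyq2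
          · exact (D.path h').snd_mem_support_of_mem_edges hxyq2
        exact D.internal_disjoint h h' hne w hw1 hw2'
      · have hw1' : w ∈ (D.path h).support := by
          rcases hS u' v' h' w hw2 hwp1 with he | he <;> rw [he]
          · exact (D.path h).fst_mem_support_of_mem_edges hxyq1
          · exact (D.path h).snd_mem_support_of_mem_edges hxyq1
        exact D.internal_disjoint h h' hne w hw1' hw2
      · exact (hxy_endpoints h h' hne
          ((D.path h).fst_mem_support_of_mem_edges hxyq1)
          ((D.path h).snd_mem_support_of_mem_edges hxyq1)
          ((D.path h').fst_mem_support_of_mem_edges hxyq2)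
          ((D.path h').snd_mem_support_of_mem_edges hxyq2)).elim
  · -- a vertex of the interior of the flat path lies on the subdivision: contradiction
    exfalso
    push_neg at hS
    obtain ⟨u', v', h', w0, hw0s, hw0p, hw0x, hw0y⟩ := hS
    obtain ⟨i0, hvi0, hi0le⟩ := SimpleGraph.Walk.mem_support_iff_exists_getVert.mp hw0p
    have hi00 : i0 ≠ 0 := by
      intro h; rw [h, p.getVert_zero] at hvi0; exact hw0x hvi0.symm
    have hi0k : i0 ≠ p.length := by
      intro h; rw [h, p.getVert_length] at hvi0; exact hw0y hvi0.symm
    by_cases hfz : ∃ (z : W) (i : ℕ), i ≠ 0 ∧ i ≠ p.length ∧ i ≤ p.length ∧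
        D.f z = p.getVert i
    · -- a branch vertex lies in the interior of the flat path
      obtain ⟨z, m, hm0, hmk, hmle, hfzm⟩ := hfz
      rcases hspec z with h3z | ⟨b1, b2, hb12, hnadj, hzb1, hzb2, h3b1, h3b2⟩
      · exact hnotins z h3z m hm0 hmk hmle hfzm
      obtain ⟨n1, hn1e, hn1s, hn1z⟩ := hsecond hzb1
      obtain ⟨n2, hn2e, hn2s, hn2z⟩ := hsecond hzb2
      have hn12 : n1 ≠ n2 := hsecond_ne hzb1 hzb2 hb12 hn1e hn1s hn1z hn2e hn2s hn2z
      have hNmem1 : n1 ∈ G.neighborSet (p.getVert m) := by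
        rw [← hfzm]; exact ((D.path hzb1).adj_of_mem_edges hn1e)
      have hNmem2 : n2 ∈ G.neighborSet (p.getVert m) := by
        rw [← hfzm]; exact ((D.path hzb2).adj_of_mem_edges hn2e)
      rw [flat_nbhd hp hm0 hmk hmle, Set.mem_insert_iff, Set.mem_singleton_iff]
        at hNmem1 hNmem2
      have key : ∀ (B1 B2 : W) (hzB1 : H.Adj z B1) (hzB2 : H.Adj z B2), B1 ≠ B2 →
          ¬ H.Adj B1 B2 → ThreeNbrs H B1 → ThreeNbrs H B2 →
          s(D.f z, p.getVert (m - 1)) ∈ (D.path hzB1).edges →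
          s(D.f z, p.getVert (m + 1)) ∈ (D.path hzB2).edges → False := by
        intro B1 B2 hzB1 hzB2 hB12 hnadjB h3B1 h3B2 hseed1 hseed2
        have hsne : s(z, B1) ≠ s(z, B2) := by
          intro hcon
          rcases Sym2.eq_iff.mp hcon with ⟨-, h1⟩ | ⟨h1, h2⟩
          · exact hB12 h1
          · exact hzB2.ne h1
        have hdown : ∀ j < m, s(p.getVert j, p.getVert (j + 1)) ∈ (D.path hzB1).edges := by
          apply reach_start hp (D.isPath hzB1) hm0 hmle
          · rw [Sym2.eq_swap, ← hfzm]; exact hseed1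
          · intro j hj0 hjm
            constructor
            · rw [hfzm]
              exact IsPath.getVert_ne hp.1 (by omega) hmle (by omega)
            · exact (hnotins B1 h3B1 j hj0 (by omega) (by omega)).symm
        have hx1 : x ∈ (D.path hzB1).support := by
          have h00 := hdown 0 (by omega)
          rw [p.getVert_zero] at h00
          exact (D.path hzB1).fst_mem_support_of_mem_edges h00
        have hup : ∀ j, m ≤ j → j < p.length →
            s(p.getVert j, p.getVert (j + 1)) ∈ (D.path hzB2).edges := by
          apply reach_end hp (D.isPath hzB2) hmk hmle
          · rw [← hfzm]; exact hseed2
          · intro j hjm hjk hjle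
            constructor
            · rw [hfzm]
              exact IsPath.getVert_ne hp.1 hjle hmle (by omega)
            · exact (hnotins B2 h3B2 j (by omega) hjk hjle).symm
        have hy2 : y ∈ (D.path hzB2).support := by
          have hkk := hup (p.length - 1) (by omega) (by omega)
          rw [show p.length - 1 + 1 = p.length by omega, p.getVert_length] at hkk
          exact (D.path hzB2).snd_mem_support_of_mem_edges hkk
        have hfzx : D.f z ≠ x := by
          rw [hfzm]
          have hne := IsPath.getVert_ne hp.1 hmle (Nat.zero_le _) hm0
          rwa [p.getVert_zero] at hne
        have hfzy : D.f z ≠ y := by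
          rw [hfzm]
          have hne := IsPath.getVert_ne hp.1 hmle le_rfl hmk
          rwa [p.getVert_length] at hne
        by_cases hc1 : s(u0, v0) = s(z, B1)
        · have hyP1 : y ∈ (D.path hzB1).support := ((hcompat h0 hzB1 hc1).1 y).mpr hys0
          have d1 := D.internal_disjoint hzB1 hzB2 hsne y hyP1 hy2
          have d2 := D.internal_disjoint hzB2 hzB1 hsne.symm y hy2 hyP1
          rcases d1 with d1 | d1
          · exact hfzy d1.symm
          rcases d2 with d2 | d2
          · exact hfzy d2.symm
          exact hB12 (D.inj (d1.symm.trans d2))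
        by_cases hc2 : s(u0, v0) = s(z, B2)
        · have hxP2 : x ∈ (D.path hzB2).support := ((hcompat h0 hzB2 hc2).1 x).mpr hxs0
          have d1 := D.internal_disjoint hzB1 hzB2 hsne x hx1 hxP2
          have d2 := D.internal_disjoint hzB2 hzB1 hsne.symm x hxP2 hx1
          rcases d1 with d1 | d1
          · exact hfzx d1.symm
          rcases d2 with d2 | d2
          · exact hfzx d2.symm
          exact hB12 (D.inj (d1.symm.trans d2))
        · have dx1 := D.internal_disjoint hzB1 h0 (fun hcon => hc1 hcon.symm) x hx1 hxs0
          have dy2 := D.internal_disjoint hzB2 h0 (fun hcon => hc2 hcon.symm) y hy2 hys0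
          have hxfB1 : x = D.f B1 := by
            rcases dx1 with d | d
            · exact absurd d.symm hfzx
            · exact d
          have hyfB2 : y = D.f B2 := by
            rcases dy2 with d | d
            · exact absurd d.symm hfzy
            · exact d
          have dx0 := D.internal_disjoint h0 hzB1 hc1 x hxs0 hx1
          have dy0 := D.internal_disjoint h0 hzB2 hc2 y hys0 hy2
          rcases dx0 with dx0 | dx0 <;> rcases dy0 with dy0 | dy0
          · exact hxny (dx0.trans dy0.symm)
          · have hu : u0 = B1 := D.inj (dx0.symm.trans hxfB1)
            have hv : v0 = B2 := D.inj (dy0.symm.trans hyfB2)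
            exact hnadjB (hu ▸ hv ▸ h0)
          · have hv : v0 = B1 := D.inj (dx0.symm.trans hxfB1)
            have hu : u0 = B2 := D.inj (dy0.symm.trans hyfB2)
            exact hnadjB ((hu ▸ hv ▸ h0) : H.Adj B2 B1).symm
          · exact hxny (dx0.trans dy0.symm)
      rcases hNmem1 with hn1m | hn1m <;> rcases hNmem2 with hn2m | hn2m
      · exact hn12 (hn1m.trans hn2m.symm)
      · exact key b1 b2 hzb1 hzb2 hb12 hnadj h3b1 h3b2 (hn1m ▸ hn1e) (hn2m ▸ hn2e)
      · exact key b2 b1 hzb2 hzb1 hb12.symm (fun hA => hnadj hA.symm) h3b2 h3b1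
          (hn2m ▸ hn2e) (hn1m ▸ hn1e)
      · exact hn12 (hn1m.trans hn2m.symm)
    · -- no branch vertex in the interior: the whole flat path lies in one path
      push_neg at hfz
      have hall : ∀ j < p.length, s(p.getVert j, p.getVert (j + 1)) ∈ (D.path h').edges := by
        apply all_edges_of_meet hp (D.isPath h') hi00 hi0k hi0le (hvi0 ▸ hw0s)
        intro j hj0 hjk hjle
        exact ⟨(hfz u' j hj0 hjk hjle).symm, (hfz v' j hj0 hjk hjle).symm⟩
      have hx' : x ∈ (D.path h').support := by
        have h00 := hall 0 (by omega)
        rw [p.getVert_zero] at h00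
        exact (D.path h').fst_mem_support_of_mem_edges h00
      have hy' : y ∈ (D.path h').support := by
        have hkk := hall (p.length - 1) (by omega)
        rw [show p.length - 1 + 1 = p.length by omega, p.getVert_length] at hkk
        exact (D.path h').snd_mem_support_of_mem_edges hkk
      by_cases hcs : s(u0, v0) = s(u', v')
      · have hxyq' : s(x, y) ∈ (D.path h').edges := ((hcompat h0 h' hcs).2 _).mpr hx0
        exact no_cycle_in_path hp hadj (D.isPath h') hxyq' hall
      · exact hxy_endpoints h0 h' hcs hxs0 hys0 hx' hy'

end Main
section Assemble

lemma hspecK4 : ∀ z : Fin 4, ThreeNbrs (⊤ : SimpleGraph (Fin 4)) z ∨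
    ∃ b1 b2, b1 ≠ b2 ∧ ¬ (⊤ : SimpleGraph (Fin 4)).Adj b1 b2 ∧
      (⊤ : SimpleGraph (Fin 4)).Adj z b1 ∧ (⊤ : SimpleGraph (Fin 4)).Adj z b2 ∧
      ThreeNbrs (⊤ : SimpleGraph (Fin 4)) b1 ∧ ThreeNbrs (⊤ : SimpleGraph (Fin 4)) b2 := by
  intro z
  left
  simp only [ThreeNbrs, SimpleGraph.top_adj]
  revert z
  decide

lemma hspecK23 : ∀ z : Fin 2 ⊕ Fin 3,
    ThreeNbrs (completeBipartiteGraph (Fin 2) (Fin 3)) z ∨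
    ∃ b1 b2, b1 ≠ b2 ∧ ¬ (completeBipartiteGraph (Fin 2) (Fin 3)).Adj b1 b2 ∧
      (completeBipartiteGraph (Fin 2) (Fin 3)).Adj z b1 ∧
      (completeBipartiteGraph (Fin 2) (Fin 3)).Adj z b2 ∧
      ThreeNbrs (completeBipartiteGraph (Fin 2) (Fin 3)) b1 ∧
      ThreeNbrs (completeBipartiteGraph (Fin 2) (Fin 3)) b2 := by
  have hThree : ∀ i : Fin 2, ThreeNbrs (completeBipartiteGraph (Fin 2) (Fin 3)) (Sum.inl i) := by
    intro i
    refine ⟨Sum.inr 0, Sum.inr 1, Sum.inr 2, by decide, by decide, by decide, ?_, ?_, ?_⟩ <;>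
      simp [completeBipartiteGraph]
  rintro (i | j)
  · left; exact hThree i
  · right
    refine ⟨Sum.inl 0, Sum.inl 1, by decide, ?_, ?_, ?_, hThree 0, hThree 1⟩ <;>
      simp [completeBipartiteGraph]

end Assemble
/-- If `e = xy` is a compliant edge of `G` and `G - e` is outerplanar,
then `G` is outerplanar. -/
theorem stmt1 {V : Type u} (G : SimpleGraph V) (x y : V)
    (hc : Compliant G x y)
    (hop : Outerplanar (G.deleteEdges {s(x, y)})) :
    Outerplanar G := by
  constructor
  · intro hcontain
    exact hop.1 (contains_subdivision_deleteEdge hspecK4 hc hcontain)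
  · intro hcontain
    exact hop.2 (contains_subdivision_deleteEdge hspecK23 hc hcontain)
end

section
/- If G is a 2-connected graph that is not a cycle and e is a compliant edge of G, then G - e is 2-connected. -/
open SimpleGraph

universe u

section StmtTwoAuxSection
variable {V : Type u}

variable {V : Type u}

lemma aux_mem_dv {G' : SimpleGraph V} {v a : V} (h : a ≠ v) :
    a ∈ ((⊤ : G'.Subgraph).deleteVerts {v}).verts := by
  simp [Subgraph.deleteVerts_verts, h]

lemma aux_ne_of_mem_dv {G' : SimpleGraph V} {v : V}
    (a : ((⊤ : G'.Subgraph).deleteVerts {v}).verts) : (a : V) ≠ v := by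
  have h2 : (a : V) ∈ ((⊤ : G'.Subgraph).verts \ {v}) := a.2
  simpa using h2.2

lemma aux_lift_walk {G' : SimpleGraph V} {v : V} {a b : V} (w : G'.Walk a b) :
    v ∉ w.support →
    ∀ (ha : a ∈ ((⊤ : G'.Subgraph).deleteVerts {v}).verts)
      (hb : b ∈ ((⊤ : G'.Subgraph).deleteVerts {v}).verts),
      (((⊤ : G'.Subgraph).deleteVerts {v}).coe).Reachable ⟨a, ha⟩ ⟨b, hb⟩ := by
  induction w with
  | nil => intro _ ha hb; exact Reachable.refl _
  | @cons a c b h q ih =>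
    intro hv ha hb
    rw [Walk.support_cons] at hv
    have hcv : c ≠ v := fun he => hv (List.mem_cons_of_mem _ (he ▸ q.start_mem_support))
    have hav : a ≠ v := fun he => hv (he ▸ List.mem_cons_self)
    have hadj : (((⊤ : G'.Subgraph).deleteVerts {v}).coe).Adj ⟨a, ha⟩ ⟨c, aux_mem_dv hcv⟩ := by
      simp [Subgraph.deleteVerts_adj, hav, hcv, h]
    exact hadj.reachable.trans (ih (fun hm => hv (List.mem_cons_of_mem _ hm)) (aux_mem_dv hcv) hb)

lemma aux_coe_conn_iff (G' : SimpleGraph V) (v : V) :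
    (((⊤ : G'.Subgraph).deleteVerts {v}).coe).Connected ↔
      ((∃ a : V, a ≠ v) ∧ ∀ a b : V, a ≠ v → b ≠ v → ∃ w : G'.Walk a b, v ∉ w.support) := by
  constructor
  · intro h
    obtain ⟨a0⟩ := h.nonempty
    refine ⟨⟨a0, aux_ne_of_mem_dv a0⟩, ?_⟩
    intro a b hav hbv
    obtain ⟨w⟩ := h.preconnected ⟨a, aux_mem_dv hav⟩ ⟨b, aux_mem_dv hbv⟩
    refine ⟨w.map (Subgraph.hom _), ?_⟩
    change v ∉ (w.map (Subgraph.hom _)).support; rw [Walk.support_map]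
    intro hvmem
    obtain ⟨s, _, hsv⟩ := List.mem_map.mp hvmem
    exact aux_ne_of_mem_dv s hsv
  · rintro ⟨⟨a, ha⟩, hwalks⟩
    rw [connected_iff]
    refine ⟨?_, ⟨⟨a, aux_mem_dv ha⟩⟩⟩
    intro u w
    obtain ⟨wk, hwk⟩ := hwalks u w (aux_ne_of_mem_dv u) (aux_ne_of_mem_dv w)
    simpa using aux_lift_walk wk hwk u.2 w.2

def AuxReach (G₂ : SimpleGraph V) (P : Set V) (r u : V) : Prop :=
  ∃ w : G₂.Walk r u, ∀ c ∈ w.support, c ∉ P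

lemma AuxReach.symm {G₂ : SimpleGraph V} {P : Set V} {r u : V}
    (h : AuxReach G₂ P r u) : AuxReach G₂ P u r := by
  obtain ⟨w, hw⟩ := h
  exact ⟨w.reverse, fun c hc => hw c (by rwa [Walk.support_reverse, List.mem_reverse] at hc)⟩

lemma AuxReach.step {G₂ : SimpleGraph V} {P : Set V} {r u u' : V}
    (h : AuxReach G₂ P r u) (hadj : G₂.Adj u u') (hu' : u' ∉ P) : AuxReach G₂ P r u' := by
  obtain ⟨w, hw⟩ := h
  refine ⟨w.concat hadj, fun c hc => ?_⟩
  rw [Walk.support_concat, List.mem_append] at hc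
  rcases hc with hc | hc
  · exact hw c hc
  · simp at hc; subst hc; exact hu'

lemma aux_exists_third [Finite V] (hcard : 3 ≤ Nat.card V) (a b : V) :
    ∃ v : V, v ≠ a ∧ v ≠ b := by
  by_contra hno
  push_neg at hno
  have hsub : (Set.univ : Set V) ⊆ {a, b} := by
    intro v _
    by_cases hva : v = a
    · exact Or.inl hva
    · exact Or.inr (hno v hva)
  have h1 := Set.ncard_le_ncard hsub (Set.toFinite _)
  rw [Set.ncard_univ] at h1
  have h2 : ({a, b} : Set V).ncard ≤ 2 := by
    refine le_trans (Set.ncard_insert_le a {b}) ?_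
    simp
  omega

lemma aux_conn_of_two [Finite V] {G : SimpleGraph V} (h2 : TwoConnected G) : G.Connected := by
  have hne : Nonempty V := (Nat.card_pos_iff.mp (by have := h2.1; omega : 0 < Nat.card V)).1
  rw [connected_iff]
  refine ⟨?_, hne⟩
  intro a b
  by_cases hab : a = b
  · subst hab; exact Reachable.refl _
  · obtain ⟨v, hva, hvb⟩ := aux_exists_third h2.1 a b
    obtain ⟨w, -⟩ := ((aux_coe_conn_iff G v).mp (h2.2 v)).2 a b hva.symm hvb.symm
    exact ⟨w⟩

lemma aux_key [Finite V] (G : SimpleGraph V) (h2 : TwoConnected G) (hnc : ¬ IsCycleGraph G)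
    {x y : V} (hadj : G.Adj x y) (p : G.Walk x y) (hp : IsFlatPath G p) :
    AuxReach (G.deleteEdges {s(x, y)}) {w | w ∈ p.support ∧ w ≠ x ∧ w ≠ y} x y := by
  classical
  set G₂ := G.deleteEdges {s(x, y)} with hG2
  set P : Set V := {w | w ∈ p.support ∧ w ≠ x ∧ w ≠ y} with hPdef
  by_contra hny
  obtain ⟨hpath, hlen, hdeg⟩ := hp
  have hxP : x ∉ P := fun h => h.2.1 rfl
  have hyP : y ∉ P := fun h => h.2.2 rfl
  have hGconn : G.Connected := aux_conn_of_two h2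
  -- F2 : neighbors of internal vertices are along p
  have hF2 : ∀ c u, c ∈ p.support → c ≠ x → c ≠ y → G.Adj c u → s(c, u) ∈ p.edges := by
    intro c u hc hcx hcy hcu
    have hqp : (p.takeUntil c hc).IsPath := hpath.takeUntil hc
    have hrp : (p.dropUntil c hc).IsPath := hpath.dropUntil hc
    -- first neighbor from takeUntil (reversed)
    have hq0 : ¬ (p.takeUntil c hc).reverse.Nil := by
      intro hn
      exact hcx (Walk.eq_of_length_eq_zero (Walk.nil_iff_length_eq.mp hn))
    obtain ⟨a, hca, q', hq'⟩ := Walk.not_nil_iff.mp hq0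
    have hr0 : ¬ (p.dropUntil c hc).Nil := by
      intro hn
      exact hcy (Walk.eq_of_length_eq_zero (Walk.nil_iff_length_eq.mp hn))
    obtain ⟨b, hcb, r', hr'⟩ := Walk.not_nil_iff.mp hr0
    have hea : s(c, a) ∈ p.edges := by
      have h1 : s(c, a) ∈ (p.takeUntil c hc).reverse.edges := by
        rw [hq', Walk.edges_cons]; exact List.mem_cons_self
      rw [Walk.edges_reverse, List.mem_reverse] at h1
      exact p.edges_takeUntil_subset hc h1
    have heb : s(c, b) ∈ p.edges := by
      refine p.edges_dropUntil_subset hc ?_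
      rw [hr', Walk.edges_cons]; exact List.mem_cons_self
    have hab : a ≠ b := by
      intro he; subst he
      have ha_q : a ∈ (p.takeUntil c hc).support := by
        have : a ∈ (p.takeUntil c hc).reverse.support := by
          rw [hq', Walk.support_cons]; exact List.mem_cons_of_mem _ q'.start_mem_support
        rwa [Walk.support_reverse, List.mem_reverse] at this
      have ha_rt : a ∈ (p.dropUntil c hc).support.tail := by
        rw [hr', Walk.support_cons]
        exact r'.start_mem_support
      have hnd : ((p.takeUntil c hc).support ++ (p.dropUntil c hc).support.tail).Nodup := by
        rw [← Walk.support_append, p.take_spec hc]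
        exact hpath.support_nodup
      exact List.disjoint_of_nodup_append hnd ha_q ha_rt
    have hset : ({a, b} : Set V) = G.neighborSet c := by
      refine Set.eq_of_subset_of_ncard_le ?_ ?_ (Set.toFinite _)
      · rintro z (rfl | rfl)
        · exact hca
        · exact hcb
      · rw [hdeg c hc hcx hcy, Set.ncard_pair hab]
    have hu : u ∈ ({a, b} : Set V) := by rw [hset]; exact hcu
    rcases hu with rfl | rfl
    · exact hea
    · exact heb
  -- Claim A (both directions)
  have claimA : ∀ r o : V, s(r, o) = s(x, y) → G.Adj r o → ¬ AuxReach G₂ P r o →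
      ∀ u, AuxReach G₂ P r u → u = r := by
    intro r o hro hradj hnro u hu
    by_contra hur
    have stepA : ∀ w, AuxReach G₂ P r w → w ≠ r → ∀ w', G.Adj w w' → AuxReach G₂ P r w' := by
      intro w hw hwr w' hww'
      have hwo : w ≠ o := fun h => hnro (h ▸ hw)
      have hwxy : w ≠ x ∧ w ≠ y := by
        rcases Sym2.eq_iff.mp hro with ⟨h1, h2⟩ | ⟨h1, h2⟩
        · exact ⟨h1 ▸ hwr, h2 ▸ hwo⟩
        · exact ⟨h2 ▸ hwo, h1 ▸ hwr⟩
      have hG2adj : G₂.Adj w w' := by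
        rw [hG2, deleteEdges_adj]
        refine ⟨hww', ?_⟩
        simp only [Set.mem_singleton_iff]
        intro he
        rcases Sym2.eq_iff.mp he with ⟨h1, _⟩ | ⟨h1, _⟩
        · exact hwxy.1 h1
        · exact hwxy.2 h1
      have hwnP : w ∉ P := by
        obtain ⟨wk, hwk⟩ := hw
        exact hwk w wk.end_mem_support
      have hw'nP : w' ∉ P := by
        intro hw'P
        have he := hF2 w' w hw'P.1 hw'P.2.1 hw'P.2.2 hww'.symm
        exact hwnP ⟨Walk.snd_mem_support_of_mem_edges p he, hwxy.1, hwxy.2⟩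
      exact hw.step hG2adj hw'nP
    have noesc : ∀ {w t : V} (wk : G.Walk w t), r ∉ wk.support →
        AuxReach G₂ P r w → AuxReach G₂ P r t := by
      intro w t wk
      induction wk with
      | nil => exact fun _ h => h
      | @cons w1 c1 t1 h1 q1 ih =>
        intro hr hw
        rw [Walk.support_cons] at hr
        have hwr : w1 ≠ r := fun he => hr (he ▸ List.mem_cons_self)
        exact ih (fun hm => hr (List.mem_cons_of_mem _ hm)) (stepA w1 hw hwr c1 h1)
    have hor : o ≠ r := hradj.ne'
    obtain ⟨wk, hwkr⟩ := ((aux_coe_conn_iff G r).mp (h2.2 r)).2 u o hur hor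
    exact hnro (noesc wk hwkr hu)
  have hSx : ∀ u, AuxReach G₂ P x u → u = x := claimA x y rfl hadj hny
  have hSy : ∀ u, AuxReach G₂ P y u → u = y :=
    claimA y x Sym2.eq_swap hadj.symm (fun h => hny h.symm)
  -- Claim C : every vertex lies on p
  have toXY : ∀ {u t : V} (wk : G.Walk u t), t = x → u ∉ p.support →
      (AuxReach G₂ P x u ∨ AuxReach G₂ P y u) := by
    intro u t wk
    induction wk with
    | nil => intro heq h; exact absurd p.start_mem_support (heq ▸ h)
    | @cons u1 c1 t1 h1 q1 ih =>
      intro heq hu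
      have hux : u1 ≠ x := fun h' => hu (h' ▸ p.start_mem_support)
      have huy : u1 ≠ y := fun h' => hu (h' ▸ p.end_mem_support)
      have hunP : u1 ∉ P := fun h => hu h.1
      have hG2adj : ∀ {z : V}, G.Adj z u1 → G₂.Adj z u1 := by
        intro z hz
        rw [hG2, deleteEdges_adj]
        refine ⟨hz, ?_⟩
        simp only [Set.mem_singleton_iff]
        intro he
        rcases Sym2.eq_iff.mp he with ⟨_, h4⟩ | ⟨_, h4⟩
        · exact huy h4
        · exact hux h4
      by_cases hcs : c1 ∈ p.support
      · by_cases hcx : c1 = x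
        · subst hcx
          left
          exact ⟨Walk.cons (hG2adj h1.symm) Walk.nil, by
            intro z hz
            simp only [Walk.support_cons, Walk.support_nil, List.mem_cons,
              List.mem_singleton, List.not_mem_nil, or_false] at hz
            rcases hz with rfl | rfl
            · exact hxP
            · exact hunP⟩
        · by_cases hcy : c1 = y
          · subst hcy
            right
            exact ⟨Walk.cons (hG2adj h1.symm) Walk.nil, by
              intro z hz
              simp only [Walk.support_cons, Walk.support_nil, List.mem_cons,
                List.mem_singleton, List.not_mem_nil, or_false] at hz
              rcases hz with rfl | rfl
              · exact hyP
              · exact hunP⟩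
          · exfalso
            have he := hF2 c1 u1 hcs hcx hcy h1.symm
            exact hu (Walk.snd_mem_support_of_mem_edges p he)
      · rcases ih heq hcs with hr | hr
        · exact Or.inl (hr.step (hG2adj h1.symm) hunP)
        · exact Or.inr (hr.step (hG2adj h1.symm) hunP)
  have hall : ∀ u, u ∈ p.support := by
    intro u
    by_contra hu
    obtain ⟨wk⟩ := hGconn.preconnected u x
    rcases toXY wk rfl hu with hr | hr
    · exact hu ((hSx u hr) ▸ p.start_mem_support)
    · exact hu ((hSy u hr) ▸ p.end_mem_support)
  -- endpoint degree
  have degend : ∀ {x' y' : V} (p' : G.Walk x' y'), p'.IsPath → 2 ≤ p'.length → G.Adj x' y' →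
      (∀ c u, c ∈ p'.support → c ≠ x' → c ≠ y' → G.Adj c u → s(c, u) ∈ p'.edges) →
      (∀ u, u ∈ p'.support) → (G.neighborSet x').ncard = 2 := by
    intro x' y' p' hp' hlen' hadj' hF2' hall'
    cases p' with
    | nil => simp at hlen'
    | @cons _ a₀ _ h q =>
      have hxq : x' ∉ q.support := ((Walk.cons_isPath_iff h q).mp hp').2
      have hqpath : q.IsPath := ((Walk.cons_isPath_iff h q).mp hp').1
      have ha₀y : a₀ ≠ y' := by
        intro he
        cases q with
        | nil => simp [Walk.length_cons] at hlen'
        | @cons _ b1 _ h' q' =>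
          have h5 : a₀ ∈ q'.support := he ▸ q'.end_mem_support
          exact ((Walk.cons_isPath_iff h' q').mp hqpath).2 h5
      have hset : G.neighborSet x' = {y', a₀} := by
        apply Set.Subset.antisymm
        · intro u hu
          rw [mem_neighborSet] at hu
          by_cases h1 : u = y'
          · exact Or.inl h1
          · have h2 : u ≠ x' := hu.ne'
            have h3 := hF2' u x' (hall' u) h2 h1 hu.symm
            rw [Walk.edges_cons, List.mem_cons] at h3
            rcases h3 with h3 | h3
            · rcases Sym2.eq_iff.mp h3 with ⟨_, h5⟩ | ⟨h4, _⟩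
              · exact absurd h5 h.ne
              · exact Or.inr h4
            · exact absurd (Walk.snd_mem_support_of_mem_edges q h3) hxq
        · rintro z (rfl | rfl)
          · exact hadj'
          · exact h
      rw [hset, Set.ncard_pair (Ne.symm ha₀y)]
  have hdx : (G.neighborSet x).ncard = 2 := degend p hpath hlen hadj hF2 hall
  have hdy : (G.neighborSet y).ncard = 2 := by
    refine degend p.reverse hpath.reverse (by rwa [Walk.length_reverse]) hadj.symm ?_ ?_
    · intro c u hc hcy hcx hcu
      rw [Walk.edges_reverse, List.mem_reverse]
      exact hF2 c u (by rwa [Walk.support_reverse, List.mem_reverse] at hc) hcx hcy hcu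
    · intro u
      rw [Walk.support_reverse, List.mem_reverse]
      exact hall u
  refine hnc ⟨hGconn, fun v => ?_⟩
  by_cases hvx : v = x
  · exact hvx ▸ hdx
  · by_cases hvy : v = y
    · exact hvy ▸ hdy
    · exact hdeg v (hall v) hvx hvy

variable {V : Type u}

lemma aux_walk_del {G : SimpleGraph V} {x y v : V}
    (hW : v ≠ x → v ≠ y → ∃ W : (G.deleteEdges {s(x, y)}).Walk x y, v ∉ W.support) :
    ∀ {a b : V} (w : G.Walk a b), v ∉ w.support →
      ∃ w' : (G.deleteEdges {s(x, y)}).Walk a b, v ∉ w'.support := by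
  intro a b w
  induction w with
  | nil => intro h; exact ⟨Walk.nil, by simpa using h⟩
  | @cons a c b h q ih =>
    intro hv
    rw [Walk.support_cons] at hv
    have hva : v ≠ a := fun he => hv (he ▸ List.mem_cons_self)
    have hvq : v ∉ q.support := fun hm => hv (List.mem_cons_of_mem _ hm)
    have hvc : v ≠ c := fun he => hvq (he ▸ q.start_mem_support)
    obtain ⟨q', hq'⟩ := ih hvq
    by_cases he : s(a, c) = s(x, y)
    · rcases Sym2.eq_iff.mp he with ⟨h1, h2⟩ | ⟨h1, h2⟩
      · subst h1; subst h2
        obtain ⟨W, hWv⟩ := hW hva hvc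
        refine ⟨W.append q', ?_⟩
        rw [Walk.support_append]
        intro hm
        rcases List.mem_append.mp hm with hm | hm
        · exact hWv hm
        · exact hq' (List.mem_of_mem_tail hm)
      · subst h1; subst h2
        obtain ⟨W, hWv⟩ := hW hvc hva
        refine ⟨W.reverse.append q', ?_⟩
        rw [Walk.support_append]
        intro hm
        rcases List.mem_append.mp hm with hm | hm
        · rw [Walk.support_reverse, List.mem_reverse] at hm
          exact hWv hm
        · exact hq' (List.mem_of_mem_tail hm)
    · refine ⟨Walk.cons (by rw [deleteEdges_adj]; exact ⟨h, by simpa using he⟩) q', ?_⟩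
      rw [Walk.support_cons]
      intro hm
      rcases List.mem_cons.mp hm with hm | hm
      · exact hva hm
      · exact hq' hm

lemma aux_F0 {G : SimpleGraph V} {x y : V} (p : G.Walk x y) (hpath : p.IsPath)
    (hlen : 2 ≤ p.length) : s(x, y) ∉ p.edges := by
  cases p with
  | nil => simp
  | @cons _ a₀ _ h q =>
    intro hmem
    rw [Walk.edges_cons, List.mem_cons] at hmem
    rcases hmem with h1 | h1
    · rcases Sym2.eq_iff.mp h1 with ⟨_, h3⟩ | ⟨h2, _⟩
      · -- y = a₀
        subst h3
        cases q with
        | nil => simp [Walk.length_cons] at hlen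
        | @cons _ b1 _ h' q' =>
          have hqpath : (Walk.cons h' q').IsPath := ((Walk.cons_isPath_iff _ _).mp hpath).1
          exact ((Walk.cons_isPath_iff _ _).mp hqpath).2 q'.end_mem_support
      · exact h.ne h2
    · exact ((Walk.cons_isPath_iff _ _).mp hpath).2 (Walk.fst_mem_support_of_mem_edges q h1)

end StmtTwoAuxSection

/-- If `G` is 2-connected, not a cycle, and `e = xy` is a compliant edge,
then `G - e` is 2-connected. -/
theorem stmt2 {V : Type u} [Finite V] (G : SimpleGraph V)
    (h2 : TwoConnected G) (hnc : ¬ IsCycleGraph G)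
    (x y : V) (hc : Compliant G x y) :
    TwoConnected (G.deleteEdges {s(x, y)}) := by
  classical
  obtain ⟨hadj, p, hp⟩ := hc
  refine ⟨h2.1, ?_⟩
  intro v
  rw [aux_coe_conn_iff]
  constructor
  · obtain ⟨a, ha, -⟩ := aux_exists_third h2.1 v v
    exact ⟨a, ha⟩
  · intro a b hav hbv
    have hW : v ≠ x → v ≠ y → ∃ W : (G.deleteEdges {s(x, y)}).Walk x y, v ∉ W.support := by
      intro hvx hvy
      by_cases hvp : v ∈ p.support
      · obtain ⟨W, hWsup⟩ := aux_key G h2 hnc hadj p hp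
        exact ⟨W, fun hmem => hWsup v hmem ⟨hvp, hvx, hvy⟩⟩
      · have hF0 : ∀ e ∈ p.edges, e ∉ ({s(x, y)} : Set (Sym2 V)) := by
          intro e hee
          simp only [Set.mem_singleton_iff]
          rintro rfl
          exact aux_F0 p hp.1 hp.2.1 hee
        refine ⟨p.toDeleteEdges _ hF0, ?_⟩
        rw [Walk.support_transfer]
        exact hvp
    obtain ⟨w, hw⟩ := ((aux_coe_conn_iff G v).mp (h2.2 v)).2 a b hav hbv
    exact aux_walk_del hW w hw
end

section
/- Let G be a 2-connected graph with no compliant edges that is not a cycle, let xy be an edge of G, let S be the vertex set of a connected component of G - {x,y}, and let H be the subgraph of G induced on S ∪ {x,y}. Then H is 2-connected. -/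
open SimpleGraph

universe u

section Aux

variable {V : Type u} {G : SimpleGraph V}

lemma reach_ind {T : Set V} :
    ∀ {a b : V} (p : G.Walk a b), (∀ u ∈ p.support, u ∈ T) →
      ∀ (ha : a ∈ T) (hb : b ∈ T), (G.induce T).Reachable ⟨a, ha⟩ ⟨b, hb⟩ := by
  intro a b p
  induction p with
  | nil => intro _ ha hb; exact Reachable.refl _
  | @cons a' c' b' h q ih =>
    intro hp ha hb
    have hc : c' ∈ T := hp c' (by simp)
    have hadj : (G.induce T).Adj ⟨a', ha⟩ ⟨c', hc⟩ := h
    exact hadj.reachable.trans (ih (fun u hu => hp u (by simp [hu])) hc hb)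

lemma avoid (hG : ∀ v : V, ((⊤ : G.Subgraph).deleteVerts {v}).coe.Connected)
    {v w t : V} (hw : w ≠ v) (ht : t ≠ v) : ∃ p : G.Walk w t, v ∉ p.support := by
  have hwm : w ∈ ((⊤ : G.Subgraph).deleteVerts {v}).verts := by simp [hw]
  have htm : t ∈ ((⊤ : G.Subgraph).deleteVerts {v}).verts := by simp [ht]
  obtain ⟨p⟩ := (hG v).preconnected ⟨w, hwm⟩ ⟨t, htm⟩
  refine ⟨p.map (Subgraph.hom _), ?_⟩
  intro hmem
  have hmem' : v ∈ (p.map ((⊤ : G.Subgraph).deleteVerts {v}).hom).support := hmem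
  rw [Walk.support_map] at hmem'
  obtain ⟨u, hu, hval⟩ := List.mem_map.1 hmem'
  exact u.2.2 (by simpa using hval)

def delIso {U : Set V} (v : ↥U) :
    ((⊤ : (G.induce U).Subgraph).deleteVerts {v}).coe ≃g G.induce (U \ {(v : V)}) where
  toFun a := ⟨a.1.1, a.1.2, fun h => a.2.2 (Subtype.ext h)⟩
  invFun b := ⟨⟨b.1, b.2.1⟩, ⟨Set.mem_univ _, fun h => b.2.2 (congrArg Subtype.val h)⟩⟩
  left_inv a := rfl
  right_inv b := rfl
  map_rel_iff' := by
    intro a b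
    simp only [Equiv.coe_fn_mk, comap_adj, Function.Embedding.coe_subtype,
      Subgraph.coe_adj, Subgraph.deleteVerts_adj, Subgraph.top_adj]
    constructor
    · intro h
      exact ⟨a.2.1, a.2.2, b.2.1, b.2.2, h⟩
    · intro h
      exact h.2.2.2.2

lemma core {x y : V} {c : (G.induce ({x, y}ᶜ : Set V)).ConnectedComponent} {S : Set V}
    (hSc : S = Subtype.val '' c.supp) :
    ∀ {w t : V} (p : G.Walk w t), w ∈ S → t ∈ ({x, y} : Set V) →
      ∃ z ∈ ({x, y} : Set V), ∃ q : G.Walk w z,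
        (∀ u ∈ q.support, u ∈ S ∪ {x, y}) ∧ (∀ u ∈ q.support, u ∈ p.support) := by
  have hsub : S ⊆ ({x, y}ᶜ : Set V) := by
    subst hSc; rintro _ ⟨u, _, rfl⟩; exact u.2
  have hclosed : ∀ {a b : V}, a ∈ S → G.Adj a b → b ∉ ({x, y} : Set V) → b ∈ S := by
    intro a b ha hab hb
    rw [hSc] at ha ⊢
    obtain ⟨a', ha', rfl⟩ := ha
    refine ⟨⟨b, hb⟩, ?_, rfl⟩
    rw [ConnectedComponent.mem_supp_iff] at ha' ⊢
    rw [← ha']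
    have hadj : (G.induce ({x, y}ᶜ : Set V)).Adj a' ⟨b, hb⟩ := hab
    exact ConnectedComponent.connectedComponentMk_eq_of_adj hadj.symm
  intro w t p
  induction p with
  | nil =>
    intro hw ht
    exact absurd ht (hsub hw)
  | @cons w' m t' h q ih =>
    intro hw ht
    by_cases hm : m ∈ ({x, y} : Set V)
    · refine ⟨m, hm, Walk.cons h Walk.nil, ?_, ?_⟩ <;>
        · intro u hu
          simp only [Walk.support_cons, Walk.support_nil, List.mem_cons,
            List.mem_singleton] at hu
          rcases hu with rfl | rfl | h'
          · first
            | exact Or.inl hw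
            | simp
          · first
            | exact Or.inr hm
            | simp
          · cases h'
    · have hmS := hclosed hw h hm
      obtain ⟨z, hz, q', h1, h2⟩ := ih hmS ht
      refine ⟨z, hz, Walk.cons h q', ?_, ?_⟩
      · intro u hu
        rw [Walk.support_cons, List.mem_cons] at hu
        rcases hu with rfl | hu
        · exact Or.inl hw
        · exact h1 u hu
      · intro u hu
        rw [Walk.support_cons, List.mem_cons] at hu
        rcases hu with rfl | hu
        · simp
        · simp [h2 u hu]

end Aux

/-- Let `G` be a 2-connected graph with no compliant edges that is not a cycle,
let `xy` be an edge, `S` the vertex set of a connected component of `G - {x,y}`,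
and `H` the subgraph induced on `S ∪ {x,y}`. Then `H` is 2-connected. -/


theorem stmt4 {V : Type u} [Finite V] (G : SimpleGraph V)
    (h2 : TwoConnected G) (hnc : ¬ IsCycleGraph G)
    (hcomp : ∀ x y : V, ¬ Compliant G x y)
    (x y : V) (hxy : G.Adj x y) (S : Set V)
    (hS : ∃ c : (G.induce ({x, y}ᶜ : Set V)).ConnectedComponent,
        S = Subtype.val '' c.supp) :
    TwoConnected (G.induce (S ∪ {x, y})) := by
  obtain ⟨c, hSc⟩ := hS
  have hxney : x ≠ y := hxy.ne
  have hsub : S ⊆ ({x, y}ᶜ : Set V) := by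
    subst hSc; rintro _ ⟨u, _, rfl⟩; exact u.2
  obtain ⟨s0, hs0⟩ : S.Nonempty := by
    obtain ⟨r, hr⟩ := c.exists_rep
    exact ⟨r.1, hSc ▸ ⟨r, by rw [ConnectedComponent.mem_supp_iff]; exact hr, rfl⟩⟩
  have hsxy : s0 ∉ ({x, y} : Set V) := hsub hs0
  have hsx : s0 ≠ x := fun h => hsxy (by simp [h])
  have hsy : s0 ≠ y := fun h => hsxy (by simp [h])
  constructor
  · rw [Nat.card_coe_set_eq]
    have h3 : ({s0, x, y} : Set V) ⊆ S ∪ {x, y} := by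
      rintro u (rfl | rfl | rfl)
      · exact Or.inl hs0
      · exact Or.inr (by simp)
      · exact Or.inr (by simp)
    calc (3 : ℕ) = ({s0, x, y} : Set V).ncard := by
          rw [Set.ncard_insert_of_notMem (by simp [hsx, hsy]) (Set.toFinite _),
            Set.ncard_pair hxney]
      _ ≤ (S ∪ {x, y}).ncard := Set.ncard_le_ncard h3 (Set.toFinite _)
  · intro v
    rw [(delIso v).connected_iff]
    obtain ⟨t, htxy, htv⟩ : ∃ t, t ∈ ({x, y} : Set V) ∧ t ≠ (v : V) := by
      by_cases h : (v : V) = x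
      · exact ⟨y, by simp, by rw [h]; exact hxy.ne'⟩
      · exact ⟨x, by simp, fun hh => h hh.symm⟩
    have htT : t ∈ (S ∪ {x, y}) \ {(v : V)} := ⟨Or.inr htxy, htv⟩
    rw [connected_iff_exists_forall_reachable]
    refine ⟨⟨t, htT⟩, ?_⟩
    have hreachxy : ∀ (z : V) (hz : z ∈ (S ∪ {x, y}) \ {(v : V)}), z ∈ ({x, y} : Set V) →
        (G.induce ((S ∪ {x, y}) \ {(v : V)})).Reachable ⟨t, htT⟩ ⟨z, hz⟩ := by
      intro z hz hzxy
      rcases eq_or_ne z t with rfl | hne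
      · exact Reachable.refl _
      · have hadj : G.Adj t z := by
          rcases htxy with rfl | rfl <;> rcases hzxy with rfl | rfl
          · exact absurd rfl hne
          · exact hxy
          · exact hxy.symm
          · exact absurd rfl hne
        exact (show (G.induce ((S ∪ {x, y}) \ {(v : V)})).Adj ⟨t, htT⟩ ⟨z, hz⟩
          from hadj).reachable
    rintro ⟨w0, hw0⟩
    rcases hw0.1 with hwS | hwxy
    · have hwv : w0 ≠ (v : V) := hw0.2
      obtain ⟨p, hp⟩ := avoid h2.2 hwv htv
      obtain ⟨z, hz, q, h1, h2'⟩ := core hSc p hwS htxy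
      have hqT : ∀ u ∈ q.support, u ∈ (S ∪ {x, y}) \ {(v : V)} := fun u hu =>
        ⟨h1 u hu, fun h => hp (h ▸ h2' u hu)⟩
      have hreach1 := reach_ind q hqT (hqT _ q.start_mem_support) (hqT _ q.end_mem_support)
      exact (hreachxy z _ hz).trans hreach1.symm
    · exact hreachxy w0 hw0 hwxy
end

section
/- Let G be a 2-connected graph in which every cycle passes through vertex x or vertex y, and suppose there are at least two internally disjoint flat x-y paths in G. If u, v are vertices of G and Q is a path from u to v internally disjoint from a fixed x-y path P containing u and v, then {u,v} ∩ {x,y} is nonempty whenever u, v both lie on P. -/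
open SimpleGraph

universe u

private lemma start_eq_of_mem_dropUntil {V : Type u} [DecidableEq V] {G : SimpleGraph V} {a b c : V}
    {p : G.Walk a b} (hp : p.IsPath) (hc : c ∈ p.support)
    (h : a ∈ (p.dropUntil c hc).support) : a = c := by
  have hnd : p.support.Nodup := hp.support_nodup
  rw [← p.take_spec hc, Walk.support_append, List.nodup_append] at hnd
  obtain ⟨-, -, hdisj⟩ := hnd
  rw [Walk.mem_support_iff] at h
  rcases h with h | h
  · exact h
  · exact (hdisj _ (p.takeUntil c hc).start_mem_support _ h rfl).elim

private lemma end_eq_of_mem_takeUntil {V : Type u} [DecidableEq V] {G : SimpleGraph V} {a b c : V}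
    {p : G.Walk a b} (hp : p.IsPath) (hc : c ∈ p.support)
    (h : b ∈ (p.takeUntil c hc).support) : b = c := by
  have hnd : p.support.Nodup := hp.support_nodup
  rw [← p.take_spec hc, Walk.support_append, List.nodup_append] at hnd
  obtain ⟨-, -, hdisj⟩ := hnd
  have hb : b ∈ (p.dropUntil c hc).support := (p.dropUntil c hc).end_mem_support
  rw [Walk.mem_support_iff] at hb
  rcases hb with hb | hb
  · exact hb
  · exact (hdisj _ h _ hb rfl).elim

private lemma aux_cycle {V : Type u} {G : SimpleGraph V} {x y u v : V}
    (hcyc : ∀ (w : V) (c : G.Walk w w), c.IsCycle → x ∈ c.support ∨ y ∈ c.support)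
    (S : G.Walk u v) (hS : S.IsPath) (Q : G.Walk u v) (hQ : Q.IsPath)
    (hQne : 0 < Q.length)
    (hSx : x ∉ S.support) (hSy : y ∉ S.support)
    (hdisj : ∀ w ∈ Q.support, w ≠ u → w ≠ v → w ∉ S.support ∧ w ≠ x ∧ w ≠ y)
    (hedges : ∀ e ∈ Q.edges, e ∉ S.edges)
    (hux : u ≠ x) (huy : u ≠ y) (hvx : v ≠ x) (hvy : v ≠ y) : False := by
  set C : G.Walk u u := Q.append S.reverse with hC
  have hCsupp : C.support = Q.support ++ S.reverse.support.tail := Walk.support_append _ _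
  have hrevS : ∀ w, w ∈ S.reverse.support.tail → w ∈ S.support := by
    intro w hw
    have : w ∈ S.reverse.support := List.mem_of_mem_tail hw
    rwa [Walk.support_reverse, List.mem_reverse] at this
  have hedges_nodup : C.edges.Nodup := by
    rw [hC, Walk.edges_append, List.nodup_append]
    refine ⟨hQ.isTrail.edges_nodup, hS.reverse.isTrail.edges_nodup, ?_⟩
    intro e he e' he' hee
    subst hee
    rw [Walk.edges_reverse, List.mem_reverse] at he'
    exact hedges e he he'
  have hne : C ≠ Walk.nil := by
    intro h
    have h0 : C.length = 0 := by rw [h]; rfl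
    rw [hC, Walk.length_append] at h0
    omega
  have hQtl : Q.support.tail.Nodup ∧ u ∉ Q.support.tail := by
    have := hQ.support_nodup
    rw [Walk.support_eq_cons Q, List.nodup_cons] at this
    exact ⟨this.2, this.1⟩
  have hStl : S.reverse.support.tail.Nodup ∧ v ∉ S.reverse.support.tail := by
    have := hS.reverse.support_nodup
    rw [Walk.support_eq_cons S.reverse, List.nodup_cons] at this
    exact ⟨this.2, this.1⟩
  have htail : C.support.tail.Nodup := by
    have hteq : C.support.tail = Q.support.tail ++ S.reverse.support.tail := by
      rw [hCsupp, Walk.support_eq_cons Q]; rfl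
    rw [hteq, List.nodup_append]
    refine ⟨hQtl.1, hStl.1, ?_⟩
    intro w hw w' hw' hww
    subst hww
    have hwQ : w ∈ Q.support := List.mem_of_mem_tail hw
    by_cases hwu : w = u
    · exact hQtl.2 (hwu ▸ hw)
    by_cases hwv : w = v
    · exact hStl.2 (hwv ▸ hw')
    exact (hdisj w hwQ hwu hwv).1 (hrevS w hw')
  have hcycC := hcyc u C ⟨⟨⟨hedges_nodup⟩, hne⟩, htail⟩
  rcases hcycC with hmx | hmy
  · rw [hCsupp, List.mem_append] at hmx
    rcases hmx with hmx | hmx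
    · exact (hdisj x hmx hux.symm hvx.symm).2.1 rfl
    · exact hSx (hrevS x hmx)
  · rw [hCsupp, List.mem_append] at hmy
    rcases hmy with hmy | hmy
    · exact (hdisj y hmy huy.symm hvy.symm).2.2 rfl
    · exact hSy (hrevS y hmy)

/-- In a 2-connected graph in which every cycle passes through `x` or `y` and
which has two internally disjoint flat `x`-`y` paths: if `P` is an `x`-`y` path
and `Q` is a `u`-`v` path internally disjoint from `P`, then whenever both `u`
and `v` lie on `P`, the set `{u,v} ∩ {x,y}` is nonempty. -/
theorem stmt8 {V : Type u} [Finite V] (G : SimpleGraph V)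
    (h2 : TwoConnected G) (x y : V)
    (hcyc : ∀ (w : V) (c : G.Walk w w), c.IsCycle → x ∈ c.support ∨ y ∈ c.support)
    (hflat : ∃ p q : G.Walk x y, IsFlatPath G p ∧ IsFlatPath G q ∧
      (∀ w ∈ p.support, w ∈ q.support → w = x ∨ w = y))
    (P : G.Walk x y) (hP : P.IsPath)
    (u v : V) (Q : G.Walk u v) (hQ : Q.IsPath) (hQne : 0 < Q.length)
    (hint : ∀ w ∈ Q.support, w ≠ u → w ≠ v → w ∉ P.support)
    (hedge : ∀ e ∈ Q.edges, e ∉ P.edges)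
    (hu : u ∈ P.support) (hv : v ∈ P.support) :
    u = x ∨ u = y ∨ v = x ∨ v = y := by
  classical
  by_contra hcon
  push_neg at hcon
  obtain ⟨hux, huy, hvx, hvy⟩ := hcon
  have hxP : x ∈ P.support := P.start_mem_support
  have hyP : y ∈ P.support := P.end_mem_support
  by_cases hcase : u ∈ (P.takeUntil v hv).support
  · have hWpath : (P.takeUntil v hv).IsPath := hP.takeUntil hv
    set S := (P.takeUntil v hv).dropUntil u hcase with hSdef
    have hSpath : S.IsPath := hWpath.dropUntil hcase
    have hSsub : ∀ w ∈ S.support, w ∈ P.support := fun w hw =>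
      (P.support_takeUntil_subset hv)
        (((P.takeUntil v hv).support_dropUntil_subset hcase) hw)
    have hSedge : ∀ e ∈ S.edges, e ∈ P.edges := fun e he =>
      (P.edges_takeUntil_subset hv)
        (((P.takeUntil v hv).edges_dropUntil_subset hcase) he)
    have hSx : x ∉ S.support := fun hx =>
      hux (start_eq_of_mem_dropUntil hWpath hcase hx).symm
    have hSy : y ∉ S.support := by
      intro hy2
      have hy3 : y ∈ (P.takeUntil v hv).support :=
        ((P.takeUntil v hv).support_dropUntil_subset hcase) hy2
      exact hvy (end_eq_of_mem_takeUntil hP hv hy3).symm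
    refine (aux_cycle hcyc S hSpath Q hQ hQne hSx hSy ?_ ?_ hux huy hvx hvy).elim
    · intro w hw hwu hwv
      have hwP := hint w hw hwu hwv
      exact ⟨fun hws => hwP (hSsub w hws), fun h => hwP (h ▸ hxP),
        fun h => hwP (h ▸ hyP)⟩
    · exact fun e he hes => hedge e he (hSedge e hes)
  · have hcase2 : u ∈ (P.dropUntil v hv).support := by
      have h' := hu
      rw [← P.take_spec hv, Walk.mem_support_append_iff] at h'
      tauto
    have hWpath : (P.dropUntil v hv).IsPath := hP.dropUntil hv
    set S := (P.dropUntil v hv).takeUntil u hcase2 with hSdef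
    have hSpath : S.IsPath := hWpath.takeUntil hcase2
    have hSsub : ∀ w ∈ S.support, w ∈ P.support := fun w hw =>
      (P.support_dropUntil_subset hv)
        (((P.dropUntil v hv).support_takeUntil_subset hcase2) hw)
    have hSedge : ∀ e ∈ S.edges, e ∈ P.edges := fun e he =>
      (P.edges_dropUntil_subset hv)
        (((P.dropUntil v hv).edges_takeUntil_subset hcase2) he)
    have hSx : x ∉ S.support := by
      intro hx2
      have hx3 : x ∈ (P.dropUntil v hv).support :=
        ((P.dropUntil v hv).support_takeUntil_subset hcase2) hx2
      exact hvx (start_eq_of_mem_dropUntil hP hv hx3).symm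
    have hSy : y ∉ S.support := fun hy2 =>
      huy (end_eq_of_mem_takeUntil hWpath hcase2 hy2).symm
    refine (aux_cycle hcyc S hSpath Q.reverse hQ.reverse ?_ hSx hSy ?_ ?_
      hvx hvy hux huy).elim
    · rwa [Walk.length_reverse]
    · intro w hw hwv hwu
      rw [Walk.support_reverse, List.mem_reverse] at hw
      have hwP := hint w hw hwu hwv
      exact ⟨fun hws => hwP (hSsub w hws), fun h => hwP (h ▸ hxP),
        fun h => hwP (h ▸ hyP)⟩
    · intro e he hes
      rw [Walk.edges_reverse, List.mem_reverse] at he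
      exact hedge e he (hSedge e hes)
end

section
/- In a 2-connected graph G, for every vertex z there exist two paths from z to a given cycle C (with z not on C) that are disjoint except at z and meet C only at their endpoints; in particular, concatenating them gives a path of length at least 2 intersecting C exactly at its two endpoints. -/
open SimpleGraph

universe u

section Aux
open SimpleGraph Walk
set_option linter.unusedSectionVars false
variable {V : Type u} [DecidableEq V] {G : SimpleGraph V}

/-- In a path, the takeUntil and dropUntil parts meet only at the split vertex. -/
lemma take_drop_inter {u v x w : V} {p : G.Walk u v} (hp : p.IsPath) (hx : x ∈ p.support)
    (h1 : w ∈ (p.takeUntil x hx).support) (h2 : w ∈ (p.dropUntil x hx).support) : w = x := by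
  by_contra hne
  have hspec := p.take_spec hx
  have hnd : p.support.Nodup := hp.support_nodup
  rw [← hspec, Walk.support_append] at hnd
  have h2' : w ∈ (p.dropUntil x hx).support.tail := by
    have := (p.dropUntil x hx).support_eq_cons
    rw [this] at h2
    rcases List.mem_cons.mp h2 with h2 | h2
    · exact absurd h2 hne
    · exact h2
  exact (List.disjoint_of_nodup_append hnd) h1 h2'

lemma isPath_append' {u v w : V} {p : G.Walk u v} {q : G.Walk v w} (hp : p.IsPath)
    (hq : q.IsPath) (h : ∀ x ∈ p.support, x ∈ q.support → x = v) : (p.append q).IsPath := by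
  rw [Walk.isPath_def, Walk.support_append, List.nodup_append]
  refine ⟨hp.support_nodup, ?_, ?_⟩
  · have := hq.support_nodup
    rw [q.support_eq_cons] at this
    exact this.of_cons
  · intro x hxp y hxq hxy; subst hxy
    have hxq' : x ∈ q.support := by
      rw [q.support_eq_cons]; exact List.mem_cons_of_mem _ hxq
    have hxv := h x hxp hxq'
    subst hxv
    have := hq.support_nodup
    rw [q.support_eq_cons] at this
    exact (List.nodup_cons.mp this).1 hxq

/-- From 2-connectivity: a walk between any two vertices avoiding any third vertex. -/
lemma exists_avoid_walk (h2 : TwoConnected G) {z x b : V} (hz : z ≠ b) (hx : x ≠ b) :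
    ∃ W : G.Walk z x, b ∉ W.support := by
  set H := (⊤ : G.Subgraph).deleteVerts {b} with hH
  have hzm : z ∈ H.verts := ⟨trivial, by simp [hz]⟩
  have hxm : x ∈ H.verts := ⟨trivial, by simp [hx]⟩
  obtain ⟨p⟩ := (h2.2 b) ⟨z, hzm⟩ ⟨x, hxm⟩
  refine ⟨p.map H.hom, ?_⟩
  show b ∉ (p.map H.hom).support; rw [Walk.support_map]
  rintro hmem
  obtain ⟨s, _, hs⟩ := List.mem_map.mp hmem
  exact s.2.2 hs

/-- First hit of a set along a walk, as a path. -/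
lemma exists_firstHit (S : Set V) {z x : V} (hx : x ∈ S) (w : G.Walk z x) :
    ∃ t, t ∈ S ∧ ∃ p : G.Walk z t, p.IsPath ∧ (∀ y ∈ p.support, y ∈ w.support) ∧
      p.length ≤ w.length ∧ ∀ y ∈ p.support, y ∈ S → y = t := by
  suffices h : ∃ t, t ∈ S ∧ ∃ p : G.Walk z t, (∀ y ∈ p.support, y ∈ w.support) ∧
      p.length ≤ w.length ∧ ∀ y ∈ p.support, y ∈ S → y = t by
    obtain ⟨t, htS, p, hsub, hlen, hfirst⟩ := h
    exact ⟨t, htS, p.bypass, p.bypass_isPath,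
      fun y hy => hsub y (p.support_bypass_subset hy),
      le_trans p.length_bypass_le hlen,
      fun y hy => hfirst y (p.support_bypass_subset hy)⟩
  induction w with
  | nil => exact ⟨_, hx, Walk.nil, by simp, by simp, by simp⟩
  | @cons a b xx hab rest ih =>
    by_cases haS : a ∈ S
    · exact ⟨a, haS, Walk.nil, by simp, by simp, by simp⟩
    · obtain ⟨t, htS, p, hsub, hlen, hfirst⟩ := ih hx
      refine ⟨t, htS, Walk.cons hab p, ?_, by simpa using Nat.succ_le_succ hlen, ?_⟩
      · intro y hy
        rw [Walk.support_cons] at hy ⊢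
        rcases List.mem_cons.mp hy with hy | hy
        · exact hy ▸ List.mem_cons_self (a := a)
        · exact List.mem_cons_of_mem _ (hsub y hy)
      · intro y hy hyS
        rw [Walk.support_cons] at hy
        rcases List.mem_cons.mp hy with hy | hy
        · exact absurd (hy ▸ hyS) haS
        · exact hfirst y hy hyS

def AuxGoodPair (G : SimpleGraph V) (S : Set V) (z u v : V)
    (p : G.Walk z u) (q : G.Walk z v) : Prop :=
  p.IsPath ∧ q.IsPath ∧ (∀ w ∈ p.support, w ∈ q.support → w = z) ∧
  (∀ w ∈ p.support, w ∈ S → w = u) ∧ (∀ w ∈ q.support, w ∈ S → w = v)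

def AuxTwoFan (G : SimpleGraph V) (S : Set V) (z : V) : Prop :=
  ∃ u v : V, u ∈ S ∧ v ∈ S ∧ u ≠ v ∧
    ∃ (p : G.Walk z u) (q : G.Walk z v), AuxGoodPair G S z u v p q

lemma AuxGoodPair.symm {S : Set V} {z u v : V} {p : G.Walk z u} {q : G.Walk z v}
    (h : AuxGoodPair G S z u v p q) : AuxGoodPair G S z v u q p :=
  ⟨h.2.1, h.1, fun w hw hw' => h.2.2.1 w hw' hw, h.2.2.2.2, h.2.2.2.1⟩

lemma aux_fan_extend {S : Set V} {z z' u v : V} (hzS : z ∉ S) (hne : z ≠ z')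
    {p' : G.Walk z' u} {q' : G.Walk z' v} (hgp : AuxGoodPair G S z' u v p' q')
    (huv : u ≠ v) (hu : u ∈ S) (hv : v ∈ S) (hzp : z ∈ p'.support) :
    AuxTwoFan G S z := by
  obtain ⟨hp', hq', hdisj, hpS, hqS⟩ := hgp
  have hTsub : ∀ y ∈ (p'.takeUntil z hzp).support, y ∈ p'.support :=
    fun y hy => p'.support_takeUntil_subset hzp hy
  have hPsub : ∀ y ∈ (p'.dropUntil z hzp).support, y ∈ p'.support :=
    fun y hy => p'.support_dropUntil_subset hzp hy
  have hTD : ∀ w, w ∈ (p'.takeUntil z hzp).support → w ∈ (p'.dropUntil z hzp).support → w = z :=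
    fun w h1 h2 => take_drop_inter hp' hzp h1 h2
  have hz'P : z' ∉ (p'.dropUntil z hzp).support :=
    fun h => hne ((hTD z' (Walk.start_mem_support _) h).symm)
  have huT : u ∉ (p'.takeUntil z hzp).support :=
    fun h => hzS ((hTD u h (Walk.end_mem_support _)) ▸ hu)
  refine ⟨u, v, hu, hv, huv, p'.dropUntil z hzp,
    (p'.takeUntil z hzp).reverse.append q', hp'.dropUntil hzp, ?_, ?_, ?_, ?_⟩
  · refine isPath_append' (hp'.takeUntil hzp).reverse hq' ?_
    intro x hx hxq
    rw [Walk.support_reverse, List.mem_reverse] at hx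
    exact hdisj x (hTsub x hx) hxq
  · intro w hwP hwQ
    rcases (Walk.mem_support_append_iff _ _).mp hwQ with hw | hw
    · rw [Walk.support_reverse, List.mem_reverse] at hw
      exact hTD w hw hwP
    · exact absurd ((hdisj w (hPsub w hwP) hw) ▸ hwP) hz'P
  · exact fun w hw hwS => hpS w (hPsub w hw) hwS
  · intro w hwQ hwS
    rcases (Walk.mem_support_append_iff _ _).mp hwQ with hw | hw
    · rw [Walk.support_reverse, List.mem_reverse] at hw
      exact absurd ((hpS w (hTsub w hw) hwS) ▸ hw) huT
    · exact hqS w hw hwS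

lemma aux_fan_caseB_leg {S : Set V} {z z' u v t : V} (hzS : z ∉ S) (hadj : G.Adj z z')
    {p' : G.Walk z' u} {q' : G.Walk z' v} (hgp : AuxGoodPair G S z' u v p' q')
    (huv : u ≠ v) (hu : u ∈ S) (hv : v ∈ S) (hzq : z ∉ q'.support)
    {P₂ : G.Walk z t} (hP₂path : P₂.IsPath) (hz'P₂ : z' ∉ P₂.support)
    (hP₂S : ∀ y ∈ P₂.support, y ∈ S → y = t)
    (hP₂p : ∀ y ∈ P₂.support, y ∈ p'.support → y = t)
    (hP₂q : ∀ y ∈ P₂.support, y ∈ q'.support → y = t)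
    (ht : t ∈ p'.support) (htS : t ∉ S) : AuxTwoFan G S z := by
  obtain ⟨hp', hq', hdisj, hpS, hqS⟩ := hgp
  have htz' : t ≠ z' := fun h => hz'P₂ (h ▸ P₂.end_mem_support)
  have htq' : t ∉ q'.support := fun h => htz' (hdisj t ht h)
  have hDsub : ∀ y ∈ (p'.dropUntil t ht).support, y ∈ p'.support :=
    fun y hy => p'.support_dropUntil_subset ht hy
  have hz'D : z' ∉ (p'.dropUntil t ht).support :=
    fun h => htz' ((take_drop_inter hp' ht (Walk.start_mem_support _) h).symm)
  refine ⟨v, u, hv, hu, huv.symm, Walk.cons hadj q', P₂.append (p'.dropUntil t ht),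
    hq'.cons hzq, ?_, ?_, ?_, ?_⟩
  · exact isPath_append' hP₂path (hp'.dropUntil ht)
      (fun x hx hxD => hP₂p x hx (hDsub x hxD))
  · intro w hwA hwB
    rw [Walk.support_cons] at hwA
    rcases List.mem_cons.mp hwA with rfl | hw
    · rfl
    · rcases (Walk.mem_support_append_iff _ _).mp hwB with hw' | hw'
      · exact absurd ((hP₂q w hw' hw) ▸ hw) htq'
      · exact absurd ((hdisj w (hDsub w hw') hw) ▸ hw') hz'D
  · intro w hwA hwS
    rw [Walk.support_cons] at hwA
    rcases List.mem_cons.mp hwA with rfl | hw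
    · exact absurd hwS hzS
    · exact hqS w hw hwS
  · intro w hwB hwS
    rcases (Walk.mem_support_append_iff _ _).mp hwB with hw | hw
    · exact absurd ((hP₂S w hw hwS) ▸ hwS) htS
    · exact hpS w (hDsub w hw) hwS

lemma aux_fan_caseB {S : Set V} {z z' u v : V} (h2 : TwoConnected G) (hzS : z ∉ S)
    (hz'S : z' ∉ S) (hadj : G.Adj z z') {p' : G.Walk z' u} {q' : G.Walk z' v}
    (hgp : AuxGoodPair G S z' u v p' q') (huv : u ≠ v) (hu : u ∈ S) (hv : v ∈ S)
    (hzp : z ∉ p'.support) (hzq : z ∉ q'.support) : AuxTwoFan G S z := by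
  have hne : z ≠ z' := hadj.ne
  have huz' : u ≠ z' := fun h => hz'S (h ▸ hu)
  obtain ⟨W, hW⟩ := exists_avoid_walk h2 hne huz'
  have huS' : u ∈ ({y | y ∈ S ∨ y ∈ p'.support ∨ y ∈ q'.support} : Set V) := Or.inl hu
  obtain ⟨t, htS', P₂, hP₂path, hP₂sub, -, hP₂first⟩ :=
    exists_firstHit {y | y ∈ S ∨ y ∈ p'.support ∨ y ∈ q'.support} huS' W
  have hz'P₂ : z' ∉ P₂.support := fun h => hW (hP₂sub z' h)
  have htz' : t ≠ z' := fun h => hz'P₂ (h ▸ P₂.end_mem_support)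
  have hP₂S : ∀ y ∈ P₂.support, y ∈ S → y = t := fun y hy hyS => hP₂first y hy (Or.inl hyS)
  have hP₂p : ∀ y ∈ P₂.support, y ∈ p'.support → y = t :=
    fun y hy hyp => hP₂first y hy (Or.inr (Or.inl hyp))
  have hP₂q : ∀ y ∈ P₂.support, y ∈ q'.support → y = t :=
    fun y hy hyq => hP₂first y hy (Or.inr (Or.inr hyq))
  obtain ⟨hp', hq', hdisj, hpS, hqS⟩ := id hgp
  by_cases htS : t ∈ S
  · by_cases htp : t ∈ p'.support
    · -- use q' as the first leg, endpoints v and t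
      have htq' : t ∉ q'.support := fun h => htz' (hdisj t htp h)
      have htv : v ≠ t := fun h => htq' (h ▸ q'.end_mem_support)
      refine ⟨v, t, hv, htS, htv, Walk.cons hadj q', P₂, hq'.cons hzq, hP₂path, ?_, ?_, hP₂S⟩
      · intro w hwA hwB
        rw [Walk.support_cons] at hwA
        rcases List.mem_cons.mp hwA with rfl | hw
        · rfl
        · exact absurd ((hP₂q w hwB hw) ▸ hw) htq'
      · intro w hwA hwS
        rw [Walk.support_cons] at hwA
        rcases List.mem_cons.mp hwA with rfl | hw
        · exact absurd hwS hzS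
        · exact hqS w hw hwS
    · have htu : u ≠ t := fun h => htp (h ▸ p'.end_mem_support)
      refine ⟨u, t, hu, htS, htu, Walk.cons hadj p', P₂, hp'.cons hzp, hP₂path, ?_, ?_, hP₂S⟩
      · intro w hwA hwB
        rw [Walk.support_cons] at hwA
        rcases List.mem_cons.mp hwA with rfl | hw
        · rfl
        · exact absurd ((hP₂p w hwB hw) ▸ hw) htp
      · intro w hwA hwS
        rw [Walk.support_cons] at hwA
        rcases List.mem_cons.mp hwA with rfl | hw
        · exact absurd hwS hzS
        · exact hpS w hw hwS
  · rcases htS' with h | h | h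
    · exact absurd h htS
    · exact aux_fan_caseB_leg hzS hadj hgp huv hu hv hzq hP₂path hz'P₂ hP₂S hP₂p hP₂q h htS
    · exact aux_fan_caseB_leg hzS hadj hgp.symm huv.symm hv hu hzp hP₂path hz'P₂ hP₂S hP₂q
        hP₂p h htS

lemma aux_fan (h2 : TwoConnected G) {S : Set V} (hS2 : ∀ u ∈ S, ∃ b ∈ S, b ≠ u) :
    ∀ n : ℕ, ∀ z : V, z ∉ S → ∀ x, x ∈ S → ∀ W : G.Walk z x, W.length ≤ n →
      AuxTwoFan G S z := by
  intro n
  induction n with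
  | zero =>
    intro z hz x hx W hW
    exact absurd ((Walk.eq_of_length_eq_zero (Nat.le_zero.mp hW)) ▸ hx) hz
  | succ n ih =>
    intro z hz x hx W hW
    obtain ⟨t, htS, p₀, hp₀path, hp₀sub, hp₀len, hp₀first⟩ := exists_firstHit S hx W
    have hzt : z ≠ t := fun h => hz (h ▸ htS)
    cases p₀ with
    | nil => exact absurd rfl hzt
    | @cons _ z' _ hadj p₁ =>
      have hz'mem : z' ∈ (Walk.cons hadj p₁).support := by
        rw [Walk.support_cons]; exact List.mem_cons_of_mem _ p₁.start_mem_support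
      by_cases hz'S : z' ∈ S
      · have hz't : z' = t := hp₀first z' hz'mem hz'S
        subst hz't
        obtain ⟨v₀, hv₀S, hv₀t⟩ := hS2 z' hz'S
        obtain ⟨W₂, hW₂⟩ := exists_avoid_walk h2 hadj.ne hv₀t
        obtain ⟨t', ht'S, q, hqpath, hqsub, -, hqfirst⟩ := exists_firstHit S hv₀S W₂
        have hzq' : z' ∉ q.support := fun h => hW₂ (hqsub z' h)
        have hne' : z' ≠ t' := fun h => hzq' (h ▸ q.end_mem_support)
        refine ⟨z', t', hz'S, ht'S, hne', Walk.cons hadj Walk.nil, q,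
          (Walk.IsPath.nil).cons (by simp [hadj.ne]), hqpath, ?_, ?_, hqfirst⟩
        · intro w hw hwq
          rw [Walk.support_cons, Walk.support_nil] at hw
          rcases List.mem_cons.mp hw with rfl | hw
          · rfl
          · rw [List.mem_singleton] at hw
            exact absurd (hw ▸ hwq) hzq'
        · intro w hw hwS
          rw [Walk.support_cons, Walk.support_nil] at hw
          rcases List.mem_cons.mp hw with rfl | hw
          · exact absurd hwS hz
          · exact List.mem_singleton.mp hw
      · have hlen₁ : p₁.length ≤ n := by
          rw [Walk.length_cons] at hp₀len
          have := le_trans hp₀len hW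
          omega
        obtain ⟨u, v, hu, hv, huv, p', q', hgp⟩ := ih z' hz'S t htS p₁ hlen₁
        by_cases hzp : z ∈ p'.support
        · exact aux_fan_extend hz hadj.ne hgp huv hu hv hzp
        by_cases hzq : z ∈ q'.support
        · exact aux_fan_extend hz hadj.ne hgp.symm huv.symm hv hu hzq
        · exact aux_fan_caseB h2 hz hz'S hadj hgp huv hu hv hzp hzq

end Aux

/-- In a 2-connected graph, for every cycle `C` and every vertex `z` not on `C`
there are two paths from `z` to `C`, disjoint except at `z`, meeting `C` only at
their endpoints; concatenating them gives a path of length at least 2 meeting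
`C` exactly at its two (distinct) endpoints. -/
theorem stmt11 {V : Type u} [Finite V] (G : SimpleGraph V) (h2 : TwoConnected G)
    (a : V) (c : G.Walk a a) (hc : c.IsCycle) (z : V) (hz : z ∉ c.support) :
    ∃ (u v : V), u ∈ c.support ∧ v ∈ c.support ∧ u ≠ v ∧
      ∃ (p : G.Walk z u) (q : G.Walk z v), p.IsPath ∧ q.IsPath ∧
        (∀ w ∈ p.support, w ∈ q.support → w = z) ∧
        (∀ w ∈ p.support, w ∈ c.support → w = u) ∧
        (∀ w ∈ q.support, w ∈ c.support → w = v) ∧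
        ∃ r : G.Walk u v, r.IsPath ∧ 2 ≤ r.length ∧ z ∈ r.support ∧
          (∀ w ∈ r.support, w ∈ c.support → w = u ∨ w = v) := by
  classical
  set S : Set V := {w | w ∈ c.support} with hSdef
  have hzS : z ∉ S := hz
  have htl : c.support.tail.length = c.length := by
    have h1 := c.length_support
    have h2' : c.support.tail.length = c.support.length - 1 := by simp
    omega
  have h3 : 3 ≤ c.length := hc.three_le_length
  have hnd := hc.support_nodup
  have hsub : ∀ y ∈ c.support.tail, y ∈ c.support := fun y hy => by
    rw [c.support_eq_cons]; exact List.mem_cons_of_mem _ hy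
  obtain ⟨b₁, b₂, hb₁, hb₂, hbne⟩ :
      ∃ b₁ b₂, b₁ ∈ c.support.tail ∧ b₂ ∈ c.support.tail ∧ b₁ ≠ b₂ := by
    rcases hl : c.support.tail with - | ⟨x, - | ⟨y, l''⟩⟩
    · rw [hl] at htl; simp at htl; omega
    · rw [hl] at htl; simp at htl; omega
    · rw [hl] at hnd
      refine ⟨x, y, by simp, by simp, fun h => ?_⟩
      subst h
      exact (List.nodup_cons.mp hnd).1 List.mem_cons_self
  have hS2 : ∀ u ∈ S, ∃ b ∈ S, b ≠ u := by
    intro u hu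
    by_cases h : b₁ = u
    · exact ⟨b₂, hsub _ hb₂, fun hh => hbne (h.symm ▸ hh : b₂ = b₁).symm⟩
    · exact ⟨b₁, hsub _ hb₁, h⟩
  obtain ⟨W, -⟩ := exists_avoid_walk h2 (show z ≠ b₂ from fun h => hz (h ▸ hsub _ hb₂)) hbne
  obtain ⟨u, v, hu, hv, huv, p, q, hp, hq, hdisj, hpS, hqS⟩ :=
    aux_fan h2 hS2 W.length z hzS b₁ (hsub _ hb₁) W le_rfl
  refine ⟨u, v, hu, hv, huv, p, q, hp, hq, hdisj, hpS, hqS,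
    p.reverse.append q, ?_, ?_, ?_, ?_⟩
  · refine isPath_append' hp.reverse hq ?_
    intro x hx hxq
    rw [SimpleGraph.Walk.support_reverse, List.mem_reverse] at hx
    exact hdisj x hx hxq
  · have hzu : z ≠ u := fun h => hzS (h ▸ hu)
    have hzv : z ≠ v := fun h => hzS (h ▸ hv)
    have h1 : p.length ≠ 0 := fun h => hzu (SimpleGraph.Walk.eq_of_length_eq_zero h)
    have h2' : q.length ≠ 0 := fun h => hzv (SimpleGraph.Walk.eq_of_length_eq_zero h)
    rw [SimpleGraph.Walk.length_append, SimpleGraph.Walk.length_reverse]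
    omega
  · exact (SimpleGraph.Walk.mem_support_append_iff _ _).mpr
      (Or.inl p.reverse.end_mem_support)
  · intro w hw hwC
    rcases (SimpleGraph.Walk.mem_support_append_iff _ _).mp hw with hw' | hw'
    · rw [SimpleGraph.Walk.support_reverse, List.mem_reverse] at hw'
      exact Or.inl (hpS w hw' hwC)
    · exact Or.inr (hqS w hw' hwC)
end

section
/- Let G be a 2-connected graph and H a subgraph of G with at least 2 vertices such that V(G) ≠ V(H). Then there exists an H-ear: a path in G of length at least 1 whose endpoints lie in H, whose internal vertices avoid H, and which has at least one internal vertex. -/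
open SimpleGraph

universe u

section EarHelpers

variable {V : Type u} {G : SimpleGraph V}

/-- First-hit lemma: a walk from outside `S` to inside `S` yields a vertex `u ∈ S`
on the walk adjacent to a vertex `c` reachable from the start avoiding `S`. -/
lemma first_hit {S : Set V} :
    ∀ {a b : V} (p : G.Walk a b), a ∉ S → b ∈ S →
      ∃ (c u : V), G.Adj c u ∧ u ∈ S ∧ u ∈ p.support ∧
        ∃ q : G.Walk a c, ∀ w ∈ q.support, w ∉ S := by
  intro a b p
  induction p with
  | nil => intro ha hb; exact absurd hb ha
  | @cons a a' b h p ih =>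
    intro ha hb
    by_cases ha' : a' ∈ S
    · refine ⟨a, a', h, ha', ?_, Walk.nil, ?_⟩
      · simp [Walk.support_cons]
      · intro w hw
        simp only [Walk.support_nil, List.mem_singleton] at hw
        subst hw; exact ha
    · obtain ⟨c, u, hadj, huS, hus, q, hq⟩ := ih ha' hb
      refine ⟨c, u, hadj, huS, ?_, Walk.cons h q, ?_⟩
      · simp [Walk.support_cons]; right; exact hus
      · intro w hw
        simp only [Walk.support_cons, List.mem_cons] at hw
        rcases hw with rfl | hw
        · exact ha
        · exact hq w hw

lemma twoConnected_connected [Finite V] (h2 : TwoConnected G) : G.Connected := by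
  have hcard := h2.1
  have hpos : 0 < Nat.card V := by omega
  have hne : Nonempty V := (Nat.card_pos_iff.mp hpos).1
  rw [connected_iff]
  refine ⟨fun a b => ?_, hne⟩
  have hex : ∃ w : V, w ≠ a ∧ w ≠ b := by
    by_contra hcon
    push_neg at hcon
    have hsub : (Set.univ : Set V) ⊆ {a, b} := by
      intro w _
      rcases eq_or_ne w a with rfl | hwa
      · exact Set.mem_insert _ _
      · exact Set.mem_insert_of_mem _ (hcon w hwa)
    have h1 : (Set.univ : Set V).ncard ≤ ({a, b} : Set V).ncard :=
      Set.ncard_le_ncard hsub (Set.toFinite _)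
    have h2' : ({a, b} : Set V).ncard ≤ 2 := by
      refine le_trans (Set.ncard_insert_le _ _) ?_
      simp [Set.ncard_singleton]
    rw [Set.ncard_univ] at h1
    omega
  obtain ⟨w, hwa, hwb⟩ := hex
  have hconn := h2.2 w
  have hav : a ∈ ((⊤ : G.Subgraph).deleteVerts {w}).verts := by
    simp [Ne.symm hwa]
  have hbv : b ∈ ((⊤ : G.Subgraph).deleteVerts {w}).verts := by
    simp [Ne.symm hwb]
  have hr := hconn ⟨a, hav⟩ ⟨b, hbv⟩
  exact hr.map (((⊤ : G.Subgraph).deleteVerts {w}).hom)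

lemma length_one_edge {u v : V} (p : G.Walk u v) (h : p.length = 1) :
    s(u, v) ∈ p.edges := by
  cases p with
  | nil => simp at h
  | @cons _ b _ h' q =>
    have hq : q.length = 0 := by simpa using h
    have hbv : b = v := Walk.eq_of_length_eq_zero hq
    subst hbv
    simp [Walk.edges_cons]

end EarHelpers

/-- If `G` is 2-connected and `H` is a subgraph with at least 2 vertices not
covering all of `G`, then there is an `H`-ear: a path of length at least 2 with
both endpoints in `H`, all internal vertices outside `H` (hence at least one
internal vertex). -/
theorem stmt12 {V : Type u} [Finite V] (G : SimpleGraph V) (h2 : TwoConnected G)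
    (H : G.Subgraph) (hcard : 2 ≤ H.verts.ncard) (hne : H.verts ≠ Set.univ) :
    ∃ (u v : V), u ∈ H.verts ∧ v ∈ H.verts ∧
      ∃ p : G.Walk u v, p.IsPath ∧ 2 ≤ p.length ∧
        ∀ w ∈ p.support, w ≠ u → w ≠ v → w ∉ H.verts := by
  classical
  obtain ⟨x, hx⟩ := (Set.ne_univ_iff_exists_notMem _).mp hne
  have hHne : H.verts.Nonempty := Set.nonempty_of_ncard_ne_zero (by omega)
  obtain ⟨h0, hh0⟩ := hHne
  -- First attachment vertex u1
  obtain ⟨W1⟩ := (twoConnected_connected h2).preconnected x h0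
  obtain ⟨c1, u1, hadj1, hu1H, _, p1, hp1⟩ := first_hit W1 hx hh0
  -- Second attachment vertex u2 ≠ u1, via 2-connectivity (delete u1)
  obtain ⟨h', hh'H, hh'ne⟩ := Set.exists_ne_of_one_lt_ncard (show 1 < H.verts.ncard by omega) u1
  have hxu1 : x ≠ u1 := fun h => hx (h ▸ hu1H)
  have hxv : x ∈ ((⊤ : G.Subgraph).deleteVerts {u1}).verts := by simp [hxu1]
  have hh'v : h' ∈ ((⊤ : G.Subgraph).deleteVerts {u1}).verts := by simp [hh'ne]
  obtain ⟨W2c⟩ := (h2.2 u1) ⟨x, hxv⟩ ⟨h', hh'v⟩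
  set W2 : G.Walk x h' := W2c.map ((⊤ : G.Subgraph).deleteVerts {u1}).hom with hW2def
  have hW2 : ∀ w ∈ W2.support, w ≠ u1 := by
    intro w hw
    replace hw : w ∈ List.map ((⊤ : G.Subgraph).deleteVerts {u1}).hom W2c.support := by
      rw [← Walk.support_map]; exact hw
    rw [List.mem_map] at hw
    obtain ⟨s, _, rfl⟩ := hw
    have := s.2
    simp only [Subgraph.deleteVerts_verts, Subgraph.verts_top, Set.mem_diff,
      Set.mem_singleton_iff] at this
    exact this.2
  obtain ⟨c2, u2, hadj2, hu2H, hu2s, p2, hp2⟩ := first_hit W2 hx hh'H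
  have hu2ne : u2 ≠ u1 := hW2 u2 hu2s
  have hc1 : c1 ∉ H.verts := hp1 c1 p1.end_mem_support
  have hc2 : c2 ∉ H.verts := hp2 c2 p2.end_mem_support
  set M : G.Walk c1 u2 := (p1.reverse.append p2).concat hadj2 with hMdef
  set W : G.Walk u1 u2 := Walk.cons hadj1.symm M with hWdef
  have hMsupp : ∀ w ∈ M.support, w = u2 ∨ w ∉ H.verts := by
    intro w hw
    rw [hMdef, Walk.support_concat, List.mem_append,
      List.mem_singleton] at hw
    rcases hw with hw | rfl
    · rw [Walk.mem_support_append_iff] at hw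
      rcases hw with hw | hw
      · rw [Walk.support_reverse, List.mem_reverse] at hw
        exact Or.inr (hp1 w hw)
      · exact Or.inr (hp2 w hw)
    · exact Or.inl rfl
  have hWsupp : ∀ w ∈ W.support, w = u1 ∨ w = u2 ∨ w ∉ H.verts := by
    intro w hw
    rw [hWdef, Walk.support_cons, List.mem_cons] at hw
    rcases hw with rfl | hw
    · exact Or.inl rfl
    · exact Or.inr (hMsupp w hw)
  refine ⟨u1, u2, hu1H, hu2H, W.bypass, W.bypass_isPath, ?_, ?_⟩
  · by_contra hlen
    push_neg at hlen
    have hcases : W.bypass.length = 0 ∨ W.bypass.length = 1 := by omega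
    rcases hcases with h | h
    · exact hu2ne (Walk.eq_of_length_eq_zero h).symm
    · have hedge : s(u1, u2) ∈ W.edges :=
        W.edges_bypass_subset (length_one_edge W.bypass h)
      rw [hWdef, Walk.edges_cons, List.mem_cons] at hedge
      rcases hedge with hedge | hedge
      · rw [Sym2.eq_iff] at hedge
        rcases hedge with ⟨-, he⟩ | ⟨he, -⟩
        · exact hc1 (he ▸ hu2H)
        · exact hc1 (he ▸ hu1H)
      · have hmem : u1 ∈ M.support := Walk.fst_mem_support_of_mem_edges M hedge
        rcases hMsupp u1 hmem with h | h
        · exact hu2ne h.symm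
        · exact h hu1H
  · intro w hw hwu1 hwu2
    rcases hWsupp w (W.support_bypass_subset hw) with rfl | rfl | h
    · exact absurd rfl hwu1
    · exact absurd rfl hwu2
    · exact h
end

section
/- Let G be a graph obtained from a graph H by iteratively adding compliant edges (each added edge joins the endpoints of some flat path of the current graph). If H is outerplanar, then G is outerplanar. -/
open SimpleGraph

universe u

/-- One step of adding a compliant edge: add an edge joining the endpoints of
some flat path of the current graph. -/
def AddCompliantStep {V : Type u} (H G : SimpleGraph V) : Prop :=
  ∃ x y : V, x ≠ y ∧ ¬ H.Adj x y ∧ (∃ p : H.Walk x y, IsFlatPath H p) ∧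
    G = H ⊔ SimpleGraph.fromEdgeSet {s(x, y)}

namespace Stmt19

variable {V : Type u} {W : Type*}

/-- has three pairwise-distinct neighbors -/
def ThreeNbrs (K : SimpleGraph W) (w : W) : Prop :=
  ∃ t₁ t₂ t₃, t₁ ≠ t₂ ∧ t₁ ≠ t₃ ∧ t₂ ≠ t₃ ∧ K.Adj w t₁ ∧ K.Adj w t₂ ∧ K.Adj w t₃

def GoodK (K : SimpleGraph W) : Prop :=
  ∀ w, ThreeNbrs K w ∨ ∃ t₁ t₂, t₁ ≠ t₂ ∧ K.Adj w t₁ ∧ K.Adj w t₂ ∧ ¬ K.Adj t₁ t₂ ∧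
    ThreeNbrs K t₁ ∧ ThreeNbrs K t₂

lemma split_inter [DecidableEq V] {G : SimpleGraph V} {c d w u : V} (q : G.Walk c d) (hq : q.IsPath)
    (hw : w ∈ q.support) (h1 : u ∈ (q.takeUntil w hw).support)
    (h2 : u ∈ (q.dropUntil w hw).support) : u = w := by
  classical
  have hnd := hq.support_nodup
  conv at hnd => rw [← q.take_spec hw, Walk.support_append]
  rw [List.nodup_append] at hnd
  have h2' : u ∈ w :: (q.dropUntil w hw).support.tail := by
    rwa [← Walk.support_eq_cons]
  rcases List.mem_cons.mp h2' with h | h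
  · exact h
  · exact absurd rfl (hnd.2.2 u h1 u h)

lemma two_nbrs {G : SimpleGraph V} {s a b : V} (h2 : (G.neighborSet s).ncard = 2)
    (ha : G.Adj s a) (hb : G.Adj s b) (hab : a ≠ b) :
    ∀ w, G.Adj s w → w = a ∨ w = b := by
  obtain ⟨c, d, hcd, hset⟩ := Set.ncard_eq_two.mp h2
  have hmem : ∀ t, G.Adj s t → t = c ∨ t = d := by
    intro t ht
    have : t ∈ ({c, d} : Set V) := hset ▸ ht
    simpa using this
  intro w hw
  rcases hmem a ha with rfl | rfl <;> rcases hmem b hb with rfl | rfl <;>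
      rcases hmem w hw with rfl | rfl <;> tauto

lemma isPath_append {G : SimpleGraph V} {a b c : V} {P : G.Walk a b} {Q : G.Walk b c}
    (hP : P.IsPath) (hQ : Q.IsPath) (h : ∀ w ∈ P.support, w ∈ Q.support → w = b) :
    (P.append Q).IsPath := by
  rw [Walk.isPath_def, Walk.support_append]
  refine List.Nodup.append hP.support_nodup ?_ ?_
  · have := hQ.support_nodup
    rw [Q.support_eq_cons] at this
    exact this.tail
  · intro w hwP hwQ
    have hwQ' : w ∈ Q.support := by
      rw [Q.support_eq_cons]; exact List.mem_cons_of_mem _ hwQ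
    have : w = b := h w hwP hwQ'
    subst this
    have := hQ.support_nodup
    rw [Q.support_eq_cons] at this
    exact List.Nodup.notMem this hwQ

lemma prop_lemma {G : SimpleGraph V} (S supp : Set V) :
    ∀ {a b : V} (r : G.Walk a b), r.IsPath →
      (∀ w ∈ r.support, w ≠ b → w ∈ S) →
      (∀ s ∈ r.support, s ∈ S → s ∈ supp → ∀ w, G.Adj s w → w ∈ supp) →
      a ∈ supp → ∀ w ∈ r.support, w ∈ supp := by
  intro a b r
  induction r with
  | nil =>
    intro _ _ _ ha w hw
    simp only [Walk.support_nil, List.mem_singleton] at hw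
    exact hw ▸ ha
  | @cons a c b hac r' ih =>
    intro hr hint hclos ha w hw
    have hr' : r'.IsPath := hr.of_cons
    have hanotin : a ∉ r'.support := ((Walk.cons_isPath_iff _ _).mp hr).2
    have hab : a ≠ b := fun h => hanotin (h ▸ r'.end_mem_support)
    have haS : a ∈ S := hint a (by simp) hab
    have hc : c ∈ supp := hclos a (by simp) haS ha c hac
    rw [Walk.support_cons, List.mem_cons] at hw
    rcases hw with rfl | hw
    · exact ha
    · exact ih hr' (fun w hw hwb => hint w (by simp [hw]) hwb)
        (fun s hs => hclos s (by simp [hs])) hc w hw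

lemma internal_two_edges [DecidableEq V] {G : SimpleGraph V} {c d s : V} (q : G.Walk c d) (hq : q.IsPath)
    (hs : s ∈ q.support) (hsc : s ≠ c) (hsd : s ≠ d) :
    ∃ a b, a ≠ b ∧ G.Adj s a ∧ G.Adj s b ∧ s(s, a) ∈ q.edges ∧ s(s, b) ∈ q.edges ∧
      a ∈ q.support ∧ b ∈ q.support := by
  classical
  obtain ⟨a, ha, t₁, ht₁⟩ := Walk.exists_eq_cons_of_ne hsc ((q.takeUntil s hs).reverse)
  obtain ⟨b, hb, t₂, ht₂⟩ := Walk.exists_eq_cons_of_ne hsd (q.dropUntil s hs)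
  have hamem : a ∈ (q.takeUntil s hs).support := by
    have : a ∈ (q.takeUntil s hs).reverse.support := by rw [ht₁]; simp
    rwa [Walk.support_reverse, List.mem_reverse] at this
  have hbmem : b ∈ (q.dropUntil s hs).support := by rw [ht₂]; simp
  have hab : a ≠ b := by
    rintro rfl
    exact G.irrefl (split_inter q hq hs hamem hbmem ▸ ha)
  have hea : s(s, a) ∈ q.edges := by
    apply q.edges_takeUntil_subset hs
    have : s(s, a) ∈ (q.takeUntil s hs).reverse.edges := by rw [ht₁]; simp
    rwa [Walk.edges_reverse, List.mem_reverse] at this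
  have heb : s(s, b) ∈ q.edges := by
    apply q.edges_dropUntil_subset hs
    rw [ht₂]; simp
  exact ⟨a, b, hab, ha, hb, hea, heb,
    q.support_takeUntil_subset hs hamem, q.support_dropUntil_subset hs hbmem⟩

lemma split_at_edge {G : SimpleGraph V} {x y : V} :
    ∀ {c d : V} (q : G.Walk c d), s(x, y) ∈ q.edges →
      (∃ (q₁ : G.Walk c x) (h : G.Adj x y) (q₂ : G.Walk y d),
        q = q₁.append (Walk.cons h q₂)) ∨
      (∃ (q₁ : G.Walk c y) (h : G.Adj y x) (q₂ : G.Walk x d),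
        q = q₁.append (Walk.cons h q₂)) := by
  intro c d q
  induction q with
  | nil => simp
  | @cons a e b h q' ih =>
    intro he
    rw [Walk.edges_cons, List.mem_cons] at he
    rcases he with he | he
    · rw [Sym2.eq_iff] at he
      rcases he with ⟨rfl, rfl⟩ | ⟨rfl, rfl⟩
      · exact Or.inl ⟨Walk.nil, h, q', by simp⟩
      · exact Or.inr ⟨Walk.nil, h, q', by simp⟩
    · rcases ih he with ⟨q₁, h', q₂, rfl⟩ | ⟨q₁, h', q₂, rfl⟩
      · exact Or.inl ⟨Walk.cons h q₁, h', q₂, by simp⟩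
      · exact Or.inr ⟨Walk.cons h q₁, h', q₂, by simp⟩


/-- Core contradiction: a single subdivision-path cannot both use the edge `xy`
and meet the interior of the flat path. -/
lemma same_path_contra {G : SimpleGraph V} (S : Set V) {x y c d : V}
    (q : G.Walk c d) (hq : q.IsPath) (hxy : x ≠ y)
    (q₁ : G.Walk c x) (hadj : G.Adj x y) (q₂ : G.Walk y d)
    (heq : q = q₁.append (Walk.cons hadj q₂))
    (pg : G.Walk x y) (hpg : pg.IsPath) (hlen : 2 ≤ pg.length)
    (hpsup : ∀ w ∈ pg.support, w ∈ q.support)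
    (hS : ∀ w, w ∈ S ↔ w ∈ pg.support ∧ w ≠ x ∧ w ≠ y)
    (hSnb : ∀ s ∈ S, ∀ a b, G.Adj s a → G.Adj s b → a ≠ b → ∀ w, G.Adj s w → w = a ∨ w = b)
    (hc : c ∉ S) (hd : d ∉ S) : False := by
  classical
  -- support decomposition & disjointness
  have hsupq : q.support = q₁.support ++ q₂.support := by
    rw [heq, Walk.support_append, Walk.support_cons]
    simp
  have hnodup : (q₁.support ++ q₂.support).Nodup := hsupq ▸ hq.support_nodup
  rw [List.nodup_append] at hnodup
  have hdisj := hnodup.2.2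
  have hyq₁ : y ∉ q₁.support := fun h => hdisj _ h _ q₂.start_mem_support rfl
  have hxq₂ : x ∉ q₂.support := fun h => hdisj _ q₁.end_mem_support _ h rfl
  -- second vertex of pg from the y side
  obtain ⟨m, hym, t, ht⟩ := Walk.exists_eq_cons_of_ne hxy.symm pg.reverse
  have htpath : t.IsPath := by
    have : pg.reverse.IsPath := hpg.reverse
    rw [ht] at this
    exact this.of_cons
  have hynott : y ∉ t.support := by
    have : pg.reverse.IsPath := hpg.reverse
    rw [ht, Walk.cons_isPath_iff] at this
    exact this.2
  have htsub : ∀ w ∈ t.support, w ∈ pg.support := by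
    intro w hw
    have : w ∈ pg.reverse.support := by rw [ht, Walk.support_cons]; exact List.mem_cons_of_mem _ hw
    rwa [Walk.support_reverse, List.mem_reverse] at this
  have hmpg : m ∈ pg.support := htsub m t.start_mem_support
  have hmx : m ≠ x := by
    rintro rfl
    have : t = Walk.nil := Walk.isPath_iff_eq_nil.mp htpath
    rw [this] at ht
    have : pg.reverse.length = 1 := by rw [ht]; simp
    rw [Walk.length_reverse] at this
    omega
  have hmS : m ∈ S := (hS m).mpr ⟨hmpg, hmx, (G.ne_of_adj hym).symm⟩
  have hmq : m ∈ q.support := hpsup m hmpg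
  have hmc : m ≠ c := fun h => hc (h ▸ hmS)
  have hmd : m ≠ d := fun h => hd (h ▸ hmS)
  -- the edge (m,y) is an edge of q
  obtain ⟨a, b, hab, hma, hmb, hea, heb, _, _⟩ := internal_two_edges q hq hmq hmc hmd
  have hmyq : s(m, y) ∈ q.edges := by
    rcases hSnb m hmS a b hma hmb hab y hym.symm with rfl | rfl
    · exact hea
    · exact heb
  -- locate it in q₂
  have hedges : q.edges = q₁.edges ++ (s(x, y) :: q₂.edges) := by
    rw [heq, Walk.edges_append, Walk.edges_cons]
  rw [hedges, List.mem_append, List.mem_cons] at hmyq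
  have hmq₂ : m ∈ q₂.support := by
    rcases hmyq with h | h | h
    · exact absurd (q₁.snd_mem_support_of_mem_edges h) hyq₁
    · rw [Sym2.eq_iff] at h
      rcases h with ⟨h1, h2⟩ | ⟨h1, h2⟩
      · exact absurd h1 hmx
      · exact absurd h2.symm hxy
    · exact q₂.fst_mem_support_of_mem_edges h
  -- q₂ is a path
  have hq₂path : q₂.IsPath := by
    have : (q₁.append (Walk.cons hadj q₂)).IsPath := heq ▸ hq
    exact this.of_append_right.of_cons
  -- propagate along t from m to x inside q₂
  have hx2 : x ∈ q₂.support := by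
    refine prop_lemma S {w | w ∈ q₂.support} t htpath ?_ ?_ hmq₂ x t.end_mem_support
    · intro w hw hwx
      exact (hS w).mpr ⟨htsub w hw, hwx, fun h => hynott (h ▸ hw)⟩
    · intro s _ hsS hssup w hw
      have hsy : s ≠ y := ((hS s).mp hsS).2.2
      have hsd : s ≠ d := fun h => hd (h ▸ hsS)
      obtain ⟨a, b, hab, hsa, hsb, _, _, hams, hbms⟩ :=
        internal_two_edges q₂ hq₂path hssup hsy hsd
      rcases hSnb s hsS a b hsa hsb hab w hw with rfl | rfl
      · exact hams
      · exact hbms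
  exact hxq₂ hx2

lemma goodK4 : GoodK (⊤ : SimpleGraph (Fin 4)) := by
  intro w
  left
  unfold ThreeNbrs
  revert w
  decide

lemma k23adj : ∀ (i : Fin 2) (j : Fin 3),
    (completeBipartiteGraph (Fin 2) (Fin 3)).Adj (Sum.inl i) (Sum.inr j) := by
  intro i j; simp [completeBipartiteGraph]

lemma k23nadj : ∀ (i i' : Fin 2), ¬ (completeBipartiteGraph (Fin 2) (Fin 3)).Adj
    (Sum.inl i) (Sum.inl i') := by
  intro i i'; simp [completeBipartiteGraph]

lemma threeNbrsLeft (i : Fin 2) : ThreeNbrs (completeBipartiteGraph (Fin 2) (Fin 3)) (Sum.inl i) := by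
  exact ⟨Sum.inr 0, Sum.inr 1, Sum.inr 2, by simp, by simp, by simp [show (1:Fin 3) ≠ 2 by decide],
    k23adj i 0, k23adj i 1, k23adj i 2⟩

lemma goodK23 : GoodK (completeBipartiteGraph (Fin 2) (Fin 3)) := by
  intro w
  rcases w with i | j
  · exact Or.inl (threeNbrsLeft i)
  · refine Or.inr ⟨Sum.inl 0, Sum.inl 1, by simp, ?_, ?_, k23nadj 0 1, threeNbrsLeft 0,
      threeNbrsLeft 1⟩
    · exact ((completeBipartiteGraph (Fin 2) (Fin 3)).adj_symm (k23adj 0 j))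
    · exact ((completeBipartiteGraph (Fin 2) (Fin 3)).adj_symm (k23adj 1 j))

lemma main_step (K : SimpleGraph W) (hK : GoodK K) (H : SimpleGraph V) (x y : V)
    (hxy : x ≠ y) (p : H.Walk x y) (hp : IsFlatPath H p) (G : SimpleGraph V)
    (hGadj : ∀ a b, G.Adj a b ↔ H.Adj a b ∨ s(a, b) = s(x, y))
    (D : SubdivisionIn G K) : Nonempty (SubdivisionIn H K) := by
  classical
  have hle : H ≤ G := fun a b hab => (hGadj a b).mpr (Or.inl hab)
  have hGH : ∀ a b : V, G.Adj a b → s(a, b) ≠ s(x, y) → H.Adj a b := by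
    intro a b hab hne
    rcases (hGadj a b).mp hab with h | h
    · exact h
    · exact absurd h hne
  have hGHedge : ∀ e, e ∈ G.edgeSet → e ≠ s(x, y) → e ∈ H.edgeSet := by
    intro e
    induction e with
    | h a b => exact fun he hne => hGH a b he hne
  set pG : G.Walk x y := p.transfer G (fun e he => edgeSet_mono hle (p.edges_subset_edgeSet he))
    with hpGdef
  have hpGsup : pG.support = p.support := Walk.support_transfer _ _
  have hpGpath : pG.IsPath := hp.1.transfer _
  set S : Set V := {v | v ∈ p.support ∧ v ≠ x ∧ v ≠ y} with hSdef
  have hSchar : ∀ w, w ∈ S ↔ w ∈ pG.support ∧ w ≠ x ∧ w ≠ y := by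
    intro w; rw [hpGsup]; rfl
  have hS2 : ∀ s ∈ S, (G.neighborSet s).ncard = 2 := by
    intro s hs
    have hset : G.neighborSet s = H.neighborSet s := by
      ext w
      simp only [mem_neighborSet]
      constructor
      · intro h
        rcases (hGadj s w).mp h with h | h
        · exact h
        · rw [Sym2.eq_iff] at h
          rcases h with ⟨h1, h2⟩ | ⟨h1, h2⟩
          · exact absurd h1 hs.2.1
          · exact absurd h1 hs.2.2
      · exact fun h => hle h
    rw [hset]
    exact hp.2.2 s hs.1 hs.2.1 hs.2.2
  have hSnb : ∀ s ∈ S, ∀ a b : V, G.Adj s a → G.Adj s b → a ≠ b →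
      ∀ w, G.Adj s w → w = a ∨ w = b :=
    fun s hs a b ha hb hab => two_nbrs (hS2 s hs) ha hb hab
  have hNB : ∀ {u v : W} (h : K.Adj u v) (w : V), w ∈ (D.path h).support →
      ∀ t, w = D.f t → t = u ∨ t = v := by
    intro u v h w hw t ht
    rcases D.internal_not_branch h w hw ⟨t, ht⟩ with h' | h'
    · exact Or.inl (D.inj (ht ▸ h').symm ▸ rfl)
    · exact Or.inr (D.inj (ht ▸ h').symm ▸ rfl)
  have hxy_mem : ∀ {u v : W} (h : K.Adj u v), s(x, y) ∈ (D.path h).edges →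
      x ∈ (D.path h).support ∧ y ∈ (D.path h).support :=
    fun h he => ⟨(D.path h).fst_mem_support_of_mem_edges he,
      (D.path h).snd_mem_support_of_mem_edges he⟩
  have hsecond : ∀ {u v : W} (h : K.Adj u v), ∃ c, G.Adj (D.f u) c ∧ c ∈ (D.path h).support := by
    intro u v h
    have hne : D.f u ≠ D.f v := fun hh => (h.ne) (D.inj hh)
    obtain ⟨c, hc, q', hq'⟩ := Walk.exists_eq_cons_of_ne hne (D.path h)
    exact ⟨c, hc, by rw [hq']; simp⟩
  have hDFN : ∀ {z v₁ v₂ : W} (h₁ : K.Adj z v₁) (h₂ : K.Adj z v₂), v₁ ≠ v₂ →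
      ∀ c, G.Adj (D.f z) c → c ∈ (D.path h₁).support → c ∈ (D.path h₂).support → False := by
    intro z v₁ v₂ h₁ h₂ hne c hc hm₁ hm₂
    have hclne : s(z, v₁) ≠ s(z, v₂) := by
      intro hh
      rw [Sym2.eq_iff] at hh
      rcases hh with ⟨-, hh⟩ | ⟨hh, -⟩
      · exact hne hh
      · exact h₂.ne hh
    rcases D.internal_disjoint h₁ h₂ hclne c hm₁ hm₂ with h | h
    · exact G.irrefl (h ▸ hc)
    · rcases D.internal_disjoint h₂ h₁ (Ne.symm hclne) c hm₂ hm₁ with h' | h'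
      · exact G.irrefl (h' ▸ hc)
      · exact hne (D.inj (h.symm.trans h'))
  have hThree : ∀ t : W, ThreeNbrs K t → D.f t ∈ S → False := by
    rintro t ⟨t₁, t₂, t₃, h12, h13, h23, ha1, ha2, ha3⟩ hftS
    obtain ⟨c₁, hc₁, hm₁⟩ := hsecond ha1
    obtain ⟨c₂, hc₂, hm₂⟩ := hsecond ha2
    obtain ⟨c₃, hc₃, hm₃⟩ := hsecond ha3
    have hc12 : c₁ ≠ c₂ := fun h => hDFN ha1 ha2 h12 c₁ hc₁ hm₁ (h ▸ hm₂)
    rcases hSnb (D.f t) hftS c₁ c₂ hc₁ hc₂ hc12 c₃ hc₃ with h | h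
    · exact hDFN ha1 ha3 h13 c₁ hc₁ hm₁ (h ▸ hm₃)
    · exact hDFN ha2 ha3 h23 c₂ hc₂ hm₂ (h ▸ hm₃)
  have hCaseI : (∃ (u v : W) (h : K.Adj u v), s(x, y) ∈ (D.path h).edges) →
      ∀ t : W, D.f t ∉ S := by
    rintro ⟨u₀, v₀, h₀, he₀⟩ t hftS
    have hx0 : x ∈ (D.path h₀).support := (hxy_mem h₀ he₀).1
    have hy0 : y ∈ (D.path h₀).support := (hxy_mem h₀ he₀).2
    rcases hK t with h3 | ⟨a1, a2, hne12, hz1, hz2, hnadj, h3a1, h3a2⟩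
    · exact hThree t h3 hftS
    have hsbx : D.f t ≠ x := hftS.2.1
    have hsby : D.f t ≠ y := hftS.2.2
    have hsbmem : D.f t ∈ pG.support := by rw [hpGsup]; exact hftS.1
    -- x-side tail walk t₁ : Walk w₁ x
    obtain ⟨w₁, hadj₁, t₁, ht₁eq⟩ :=
      Walk.exists_eq_cons_of_ne hsbx ((pG.takeUntil (D.f t) hsbmem).reverse)
    have htake_path : (pG.takeUntil (D.f t) hsbmem).IsPath := hpGpath.takeUntil _
    have ht₁path : t₁.IsPath := by
      have h' := htake_path.reverse
      rw [ht₁eq] at h'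
      exact h'.of_cons
    have hsbnott₁ : D.f t ∉ t₁.support := by
      have h' := htake_path.reverse
      rw [ht₁eq, Walk.cons_isPath_iff] at h'
      exact h'.2
    have ht₁sub : ∀ w ∈ t₁.support, w ∈ (pG.takeUntil (D.f t) hsbmem).support := by
      intro w hw
      have h' : w ∈ (pG.takeUntil (D.f t) hsbmem).reverse.support := by
        rw [ht₁eq, Walk.support_cons]
        exact List.mem_cons_of_mem _ hw
      rwa [Walk.support_reverse, List.mem_reverse] at h'
    have hynottake : y ∉ (pG.takeUntil (D.f t) hsbmem).support := by
      intro hy'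
      have h' := split_inter pG hpGpath hsbmem hy'
        (pG.dropUntil (D.f t) hsbmem).end_mem_support
      exact hsby h'.symm
    have hintx : ∀ w ∈ t₁.support, w ≠ x → w ∈ S := by
      intro w hw hwx
      refine ⟨by rw [← hpGsup]; exact pG.support_takeUntil_subset hsbmem (ht₁sub w hw),
        hwx, ?_⟩
      intro hwy
      exact hynottake (hwy ▸ ht₁sub w hw)
    have hw₁mem : w₁ ∈ (pG.takeUntil (D.f t) hsbmem).support := ht₁sub w₁ t₁.start_mem_support
    -- y-side tail walk t₂ : Walk w₂ y
    obtain ⟨w₂, hadj₂, t₂, ht₂eq⟩ :=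
      Walk.exists_eq_cons_of_ne hsby (pG.dropUntil (D.f t) hsbmem)
    have hdrop_path : (pG.dropUntil (D.f t) hsbmem).IsPath := hpGpath.dropUntil _
    have ht₂path : t₂.IsPath := by
      have h' := hdrop_path
      rw [ht₂eq] at h'
      exact h'.of_cons
    have hsbnott₂ : D.f t ∉ t₂.support := by
      have h' := hdrop_path
      rw [ht₂eq, Walk.cons_isPath_iff] at h'
      exact h'.2
    have ht₂sub : ∀ w ∈ t₂.support, w ∈ (pG.dropUntil (D.f t) hsbmem).support := by
      intro w hw
      rw [ht₂eq, Walk.support_cons]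
      exact List.mem_cons_of_mem _ hw
    have hxnotdrop : x ∉ (pG.dropUntil (D.f t) hsbmem).support := by
      intro hx'
      have h' := split_inter pG hpGpath hsbmem
        (pG.takeUntil (D.f t) hsbmem).start_mem_support hx'
      exact hsbx h'.symm
    have hinty : ∀ w ∈ t₂.support, w ≠ y → w ∈ S := by
      intro w hw hwy
      refine ⟨by rw [← hpGsup]; exact pG.support_dropUntil_subset hsbmem (ht₂sub w hw),
        ?_, hwy⟩
      intro hwx
      exact hxnotdrop (hwx ▸ ht₂sub w hw)
    have hw₂mem : w₂ ∈ (pG.dropUntil (D.f t) hsbmem).support := ht₂sub w₂ t₂.start_mem_support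
    have hw12 : w₁ ≠ w₂ := by
      rintro rfl
      exact G.irrefl ((split_inter pG hpGpath hsbmem hw₁mem hw₂mem) ▸ hadj₁)
    -- second vertices of the two paths from the branch vertex
    have hfza1 : D.f t ≠ D.f a1 := fun hh => hz1.ne (D.inj hh)
    obtain ⟨n₁, hn₁adj, r₁, hr₁eq⟩ := Walk.exists_eq_cons_of_ne hfza1 (D.path hz1)
    have hn₁mem : n₁ ∈ (D.path hz1).support := by rw [hr₁eq]; simp
    have hfza2 : D.f t ≠ D.f a2 := fun hh => hz2.ne (D.inj hh)
    obtain ⟨n₂, hn₂adj, r₂, hr₂eq⟩ := Walk.exists_eq_cons_of_ne hfza2 (D.path hz2)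
    have hn₂mem : n₂ ∈ (D.path hz2).support := by rw [hr₂eq]; simp
    have hn12 : n₁ ≠ n₂ := fun hh => hDFN hz1 hz2 hne12 n₁ hn₁adj hn₁mem (hh ▸ hn₂mem)
    have hw₁cases := hSnb (D.f t) hftS n₁ n₂ hn₁adj hn₂adj hn12 w₁ hadj₁
    have hw₂cases := hSnb (D.f t) hftS n₁ n₂ hn₁adj hn₂adj hn12 w₂ hadj₂
    -- generic propagation along the flat path inside one subdivision path
    have hprop : ∀ (a1' : W) (hz1' : K.Adj t a1'), ThreeNbrs K a1' →
        ∀ (e w₁' : V) (t' : G.Walk w₁' e), t'.IsPath → D.f t ∉ t'.support →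
        (∀ w ∈ t'.support, w ≠ e → w ∈ S) → w₁' ∈ (D.path hz1').support →
        e ∈ (D.path hz1').support := by
      intro a1' hz1' h3' e w₁' t' ht' hsbnot hint hw₁'
      refine prop_lemma S {w | w ∈ (D.path hz1').support} t' ht' hint ?_ hw₁' e
        t'.end_mem_support
      intro s hst hsS hssup w hw
      by_cases hbr : ∃ tt, s = D.f tt
      · obtain ⟨tt, htt⟩ := hbr
        rcases hNB hz1' s hssup tt htt with he | he
        · exact absurd (show D.f t ∈ t'.support by rw [← he, ← htt]; exact hst) hsbnot
        · exact absurd (hThree a1' h3' (by rw [← he, ← htt]; exact hsS)) not_false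
      · push_neg at hbr
        obtain ⟨a, b, hab, hsa, hsb', _, _, ham, hbm⟩ :=
          internal_two_edges (D.path hz1') (D.isPath hz1') hssup (hbr t) (hbr a1')
        rcases hSnb s hsS a b hsa hsb' hab w hw with rfl | rfl
        exacts [ham, hbm]
    -- the endgame
    have hENDI : ∀ (b1 b2 : W) (hb1 : K.Adj t b1) (hb2 : K.Adj t b2), b1 ≠ b2 →
        ¬ K.Adj b1 b2 → x ∈ (D.path hb1).support → y ∈ (D.path hb2).support → False := by
      intro b1 b2 hb1 hb2 hne' hnadj' hx1 hy2
      have hclass : s(t, b1) ≠ s(t, b2) := by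
        intro hh
        rw [Sym2.eq_iff] at hh
        rcases hh with ⟨-, hh⟩ | ⟨hh, -⟩
        · exact hne' hh
        · exact hb2.ne hh
      by_cases hc1 : s(u₀, v₀) = s(t, b1)
      · have hc2 : s(t, b2) ≠ s(u₀, v₀) := fun hh => hclass ((hh.trans hc1).symm)
        rcases D.internal_disjoint hb2 h₀ hc2 y hy2 hy0 with hh | hh
        · exact hsby hh.symm
        · rcases hNB h₀ y hy0 b2 hh with he1 | he1 <;>
            (rw [Sym2.eq_iff] at hc1; rcases hc1 with ⟨h1, h2⟩ | ⟨h1, h2⟩)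
          · exact hb2.ne (he1.trans h1).symm
          · exact hne' (he1.trans h1).symm
          · exact hne' (he1.trans h2).symm
          · exact hb2.ne (he1.trans h2).symm
      · rcases D.internal_disjoint hb1 h₀ (fun hh => hc1 hh.symm) x hx1 hx0 with hh | hh
        · exact hsbx hh.symm
        · by_cases hc2 : s(u₀, v₀) = s(t, b2)
          · rcases hNB h₀ x hx0 b1 hh with he1 | he1 <;>
              (rw [Sym2.eq_iff] at hc2; rcases hc2 with ⟨h1, h2⟩ | ⟨h1, h2⟩)
            · exact hb1.ne (he1.trans h1).symm
            · exact hne' ((he1.trans h1).symm).symm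
            · exact hne' (he1.trans h2)
            · exact hb1.ne (he1.trans h2).symm
          · rcases D.internal_disjoint hb2 h₀ (fun hh => hc2 hh.symm) y hy2 hy0 with hh2 | hh2
            · exact hsby hh2.symm
            · rcases hNB h₀ x hx0 b1 hh with he1 | he1 <;>
                rcases hNB h₀ y hy0 b2 hh2 with he2 | he2
              · exact hne' (he1.trans he2.symm)
              · exact hnadj' (by rw [he1, he2]; exact h₀)
              · exact hnadj' (by rw [he1, he2]; exact h₀.symm)
              · exact hne' (he1.trans he2.symm)
    -- finish the four matching cases
    rcases hw₁cases with hw1 | hw1 <;> rcases hw₂cases with hw2 | hw2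
    · exact hw12 (hw1.trans hw2.symm)
    · have hx1 : x ∈ (D.path hz1).support :=
        hprop a1 hz1 h3a1 x w₁ t₁ ht₁path hsbnott₁ hintx (by rw [hw1]; exact hn₁mem)
      have hy2 : y ∈ (D.path hz2).support :=
        hprop a2 hz2 h3a2 y w₂ t₂ ht₂path hsbnott₂ hinty (by rw [hw2]; exact hn₂mem)
      exact hENDI a1 a2 hz1 hz2 hne12 hnadj hx1 hy2
    · have hx2 : x ∈ (D.path hz2).support :=
        hprop a2 hz2 h3a2 x w₁ t₁ ht₁path hsbnott₁ hintx (by rw [hw1]; exact hn₂mem)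
      have hy1 : y ∈ (D.path hz1).support :=
        hprop a1 hz1 h3a1 y w₂ t₂ ht₂path hsbnott₂ hinty (by rw [hw2]; exact hn₁mem)
      exact hENDI a2 a1 hz2 hz1 (Ne.symm hne12) (fun hh => hnadj hh.symm) hx2 hy1
    · exact hw12 (hw1.trans hw2.symm)
  have hEndgame : ∀ {u v : W} (h : K.Adj u v) {u' v' : W} (h' : K.Adj u' v'),
      s(u, v) ≠ s(u', v') → x ∈ (D.path h).support → y ∈ (D.path h).support →
      x ∈ (D.path h').support → y ∈ (D.path h').support → False := by
    intro u v h u' v' h' hne hx hy hx' hy'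
    have idx := D.internal_disjoint h h' hne x hx hx'
    have idy := D.internal_disjoint h h' hne y hy hy'
    have idx' := D.internal_disjoint h' h (Ne.symm hne) x hx' hx
    have idy' := D.internal_disjoint h' h (Ne.symm hne) y hy' hy
    have hxyh : (x = D.f u ∧ y = D.f v) ∨ (x = D.f v ∧ y = D.f u) := by
      rcases idx with h1 | h1 <;> rcases idy with h2 | h2
      · exact absurd (h1.trans h2.symm) hxy
      · exact Or.inl ⟨h1, h2⟩
      · exact Or.inr ⟨h1, h2⟩
      · exact absurd (h1.trans h2.symm) hxy
    have hxyh' : (x = D.f u' ∧ y = D.f v') ∨ (x = D.f v' ∧ y = D.f u') := by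
      rcases idx' with h1 | h1 <;> rcases idy' with h2 | h2
      · exact absurd (h1.trans h2.symm) hxy
      · exact Or.inl ⟨h1, h2⟩
      · exact Or.inr ⟨h1, h2⟩
      · exact absurd (h1.trans h2.symm) hxy
    apply hne
    rcases hxyh with ⟨e1, e2⟩ | ⟨e1, e2⟩ <;> rcases hxyh' with ⟨e3, e4⟩ | ⟨e3, e4⟩
    · rw [D.inj (e1.symm.trans e3), D.inj (e2.symm.trans e4)]
    · rw [D.inj (e1.symm.trans e3), D.inj (e2.symm.trans e4)]
      exact Sym2.eq_swap
    · rw [D.inj (e2.symm.trans e4), D.inj (e1.symm.trans e3)]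
      exact Sym2.eq_swap
    · rw [D.inj (e2.symm.trans e4), D.inj (e1.symm.trans e3)]
  have hprop2 : ∀ v₀ ∈ S, ∀ {u' v' : W} (h' : K.Adj u' v'), (∀ t, D.f t ∉ S) →
      v₀ ∈ (D.path h').support →
      x ∈ (D.path h').support ∧ y ∈ (D.path h').support ∧
        ∀ w ∈ p.support, w ∈ (D.path h').support := by
    intro v₀ hv₀S u' v' h' hnb hv₀mem
    have hv₀pG : v₀ ∈ pG.support := by rw [hpGsup]; exact hv₀S.1
    have hclos : ∀ s ∈ S, s ∈ (D.path h').support → ∀ w, G.Adj s w →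
        w ∈ (D.path h').support := by
      intro s hsS hssup w hw
      obtain ⟨a, b, hab, hsa, hsb', _, _, ham, hbm⟩ :=
        internal_two_edges (D.path h') (D.isPath h') hssup
          (fun hh => hnb u' (hh ▸ hsS)) (fun hh => hnb v' (hh ▸ hsS))
      rcases hSnb s hsS a b hsa hsb' hab w hw with rfl | rfl
      exacts [ham, hbm]
    have hxside : ∀ w ∈ (pG.takeUntil v₀ hv₀pG).support, w ∈ (D.path h').support := by
      have hint : ∀ w ∈ (pG.takeUntil v₀ hv₀pG).reverse.support, w ≠ x → w ∈ S := by
        intro w hw hwx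
        rw [Walk.support_reverse, List.mem_reverse] at hw
        refine ⟨by rw [← hpGsup]; exact pG.support_takeUntil_subset _ hw, hwx, ?_⟩
        intro hwy
        have := split_inter pG hpGpath hv₀pG (hwy ▸ hw)
          (pG.dropUntil v₀ hv₀pG).end_mem_support
        exact hv₀S.2.2 this.symm
      have hall := prop_lemma S {w | w ∈ (D.path h').support}
        (pG.takeUntil v₀ hv₀pG).reverse (hpGpath.takeUntil _).reverse hint
        (fun s _ hsS hssup => hclos s hsS hssup) hv₀mem
      intro w hw
      exact hall w (by rw [Walk.support_reverse, List.mem_reverse]; exact hw)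
    have hyside : ∀ w ∈ (pG.dropUntil v₀ hv₀pG).support, w ∈ (D.path h').support := by
      have hint : ∀ w ∈ (pG.dropUntil v₀ hv₀pG).support, w ≠ y → w ∈ S := by
        intro w hw hwy
        refine ⟨by rw [← hpGsup]; exact pG.support_dropUntil_subset _ hw, ?_, hwy⟩
        intro hwx
        have := split_inter pG hpGpath hv₀pG (pG.takeUntil v₀ hv₀pG).start_mem_support
          (hwx ▸ hw)
        exact hv₀S.2.1 this.symm
      exact prop_lemma S {w | w ∈ (D.path h').support} (pG.dropUntil v₀ hv₀pG)
        (hpGpath.dropUntil _) hint (fun s _ hsS hssup => hclos s hsS hssup) hv₀mem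
    refine ⟨hxside x (pG.takeUntil v₀ hv₀pG).start_mem_support,
      hyside y (pG.dropUntil v₀ hv₀pG).end_mem_support, ?_⟩
    intro w hw
    rw [← hpGsup, ← pG.take_spec hv₀pG, Walk.mem_support_append_iff] at hw
    rcases hw with hw | hw
    · exact hxside w hw
    · exact hyside w hw
  have hBdiff : ∀ {u v : W} (h : K.Adj u v), s(x, y) ∈ (D.path h).edges →
      ∀ {u' v' : W} (h' : K.Adj u' v'), s(u, v) ≠ s(u', v') →
      ∀ w ∈ S, w ∉ (D.path h').support := by
    intro u v h he u' v' h' hne w hwS hwsup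
    obtain ⟨hx', hy', _⟩ := hprop2 w hwS h' (hCaseI ⟨u, v, h, he⟩) hwsup
    exact hEndgame h h' hne (hxy_mem h he).1 (hxy_mem h he).2 hx' hy'
  have hU : ∀ {u v : W} (h : K.Adj u v), s(x, y) ∈ (D.path h).edges →
      ∀ {u' v' : W} (h' : K.Adj u' v'), s(x, y) ∈ (D.path h').edges →
      s(u, v) = s(u', v') := by
    intro u v h he u' v' h' he'
    by_contra hne
    exact hEndgame h h' hne (hxy_mem h he).1 (hxy_mem h he).2 (hxy_mem h' he').1
      (hxy_mem h' he').2
  have hBsame : ∀ {u v : W} (h : K.Adj u v), s(x, y) ∈ (D.path h).edges →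
      ∀ w ∈ S, w ∉ (D.path h).support := by
    intro u v h he w hwS hwsup
    obtain ⟨hx', hy', hall⟩ := hprop2 w hwS h (hCaseI ⟨u, v, h, he⟩) hwsup
    have hnb := hCaseI ⟨u, v, h, he⟩
    rcases split_at_edge (D.path h) he with ⟨q₁, hadjG, q₂, heqq⟩ | ⟨q₁, hadjG, q₂, heqq⟩
    · exact same_path_contra S (D.path h) (D.isPath h) hxy q₁ hadjG q₂ heqq pG hpGpath
        (by rw [Walk.length_transfer]; exact hp.2.1)
        (fun w' hw' => hall w' (by rwa [hpGsup] at hw')) hSchar hSnb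
        (fun hc => hnb u hc) (fun hd => hnb v hd)
    · have hSchar' : ∀ w', w' ∈ S ↔ w' ∈ pG.reverse.support ∧ w' ≠ y ∧ w' ≠ x := by
        intro w'
        rw [Walk.support_reverse, List.mem_reverse]
        constructor
        · rintro ⟨h1, h2, h3⟩
          exact ⟨by rwa [hpGsup], h3, h2⟩
        · rintro ⟨h1, h2, h3⟩
          exact ⟨by rwa [← hpGsup], h3, h2⟩
      exact same_path_contra S (D.path h) (D.isPath h) (Ne.symm hxy) q₁ hadjG q₂ heqq
        pG.reverse hpGpath.reverse
        (by rw [Walk.length_reverse, Walk.length_transfer]; exact hp.2.1)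
        (fun w' hw' => by
          rw [Walk.support_reverse, List.mem_reverse, hpGsup] at hw'
          exact hall w' hw') hSchar' hSnb
        (fun hc => hnb u hc) (fun hd => hnb v hd)
  have hbuild : ∀ {u v : W} (h : K.Adj u v), ∃ r : H.Walk (D.f u) (D.f v), r.IsPath ∧
      ∀ w ∈ r.support, w ∈ (D.path h).support ∨
        (s(x, y) ∈ (D.path h).edges ∧ w ∈ p.support) := by
    intro u v h
    by_cases he : s(x, y) ∈ (D.path h).edges
    · have hSfree : ∀ w ∈ S, w ∉ (D.path h).support := hBsame h he
      have hednd : (D.path h).edges.Nodup := (D.isPath h).edges_nodup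
      rcases split_at_edge (D.path h) he with ⟨q₁, hadjG, q₂, heqq⟩ | ⟨q₁, hadjG, q₂, heqq⟩
      · -- orientation x → y
        have hsupq : (D.path h).support = q₁.support ++ q₂.support := by
          rw [heqq, Walk.support_append, Walk.support_cons]
          simp
        have hnodup : (q₁.support ++ q₂.support).Nodup := hsupq ▸ (D.isPath h).support_nodup
        rw [List.nodup_append] at hnodup
        have hdisj := hnodup.2.2
        have hyq₁ : y ∉ q₁.support := fun hh => hdisj _ hh _ q₂.start_mem_support rfl
        have hxq₂ : x ∉ q₂.support := fun hh => hdisj _ q₁.end_mem_support _ hh rfl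
        have hsub1 : ∀ w ∈ q₁.support, w ∈ (D.path h).support := by
          intro w hw; rw [hsupq]; exact List.mem_append_left _ hw
        have hsub2 : ∀ w ∈ q₂.support, w ∈ (D.path h).support := by
          intro w hw; rw [hsupq]; exact List.mem_append_right _ hw
        have hedges : (D.path h).edges = q₁.edges ++ (s(x, y) :: q₂.edges) := by
          rw [heqq, Walk.edges_append, Walk.edges_cons]
        rw [hedges, List.nodup_append] at hednd
        have he1 : s(x, y) ∉ q₁.edges := fun hc => hednd.2.2 _ hc _ List.mem_cons_self rfl
        have he2 : s(x, y) ∉ q₂.edges := (List.nodup_cons.mp hednd.2.1).1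
        have hq₁H : ∀ e ∈ q₁.edges, e ∈ H.edgeSet := fun e hee =>
          hGHedge e (q₁.edges_subset_edgeSet hee) (fun hc => he1 (hc ▸ hee))
        have hq₂H : ∀ e ∈ q₂.edges, e ∈ H.edgeSet := fun e hee =>
          hGHedge e (q₂.edges_subset_edgeSet hee) (fun hc => he2 (hc ▸ hee))
        have hq₁path : q₁.IsPath := by
          have hh := D.isPath h
          rw [heqq] at hh
          exact hh.of_append_left
        have hq₂path : q₂.IsPath := by
          have hh := D.isPath h
          rw [heqq] at hh
          exact hh.of_append_right.of_cons
        have hinner : (p.append (q₂.transfer H hq₂H)).IsPath := by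
          refine isPath_append hp.1 (hq₂path.transfer _) ?_
          intro w hwp hwq
          rw [Walk.support_transfer] at hwq
          by_contra hwy
          by_cases hwx : w = x
          · exact hxq₂ (hwx ▸ hwq)
          · exact hSfree w ⟨hwp, hwx, hwy⟩ (hsub2 w hwq)
        refine ⟨(q₁.transfer H hq₁H).append (p.append (q₂.transfer H hq₂H)), ?_, ?_⟩
        · refine isPath_append (hq₁path.transfer _) hinner ?_
          intro w hw1 hw2
          rw [Walk.support_transfer] at hw1
          rw [Walk.mem_support_append_iff] at hw2
          rcases hw2 with hw2 | hw2
          · by_contra hwx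
            by_cases hwy : w = y
            · exact hyq₁ (hwy ▸ hw1)
            · exact hSfree w ⟨hw2, hwx, hwy⟩ (hsub1 w hw1)
          · rw [Walk.support_transfer] at hw2
            exact absurd hw2 (fun hh => hdisj _ hw1 _ hh rfl)
        · intro w hw
          rw [Walk.mem_support_append_iff] at hw
          rcases hw with hw | hw
          · rw [Walk.support_transfer] at hw
            exact Or.inl (hsub1 w hw)
          · rw [Walk.mem_support_append_iff] at hw
            rcases hw with hw | hw
            · exact Or.inr ⟨he, hw⟩
            · rw [Walk.support_transfer] at hw
              exact Or.inl (hsub2 w hw)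
      · -- orientation y → x
        have hsupq : (D.path h).support = q₁.support ++ q₂.support := by
          rw [heqq, Walk.support_append, Walk.support_cons]
          simp
        have hnodup : (q₁.support ++ q₂.support).Nodup := hsupq ▸ (D.isPath h).support_nodup
        rw [List.nodup_append] at hnodup
        have hdisj := hnodup.2.2
        have hxq₁ : x ∉ q₁.support := fun hh => hdisj _ hh _ q₂.start_mem_support rfl
        have hyq₂ : y ∉ q₂.support := fun hh => hdisj _ q₁.end_mem_support _ hh rfl
        have hsub1 : ∀ w ∈ q₁.support, w ∈ (D.path h).support := by
          intro w hw; rw [hsupq]; exact List.mem_append_left _ hw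
        have hsub2 : ∀ w ∈ q₂.support, w ∈ (D.path h).support := by
          intro w hw; rw [hsupq]; exact List.mem_append_right _ hw
        have hedges : (D.path h).edges = q₁.edges ++ (s(y, x) :: q₂.edges) := by
          rw [heqq, Walk.edges_append, Walk.edges_cons]
        have hxyswap : s(y, x) = s(x, y) := Sym2.eq_swap
        rw [hedges, List.nodup_append, hxyswap] at hednd
        have he1 : s(x, y) ∉ q₁.edges := fun hc => hednd.2.2 _ hc _ List.mem_cons_self rfl
        have he2 : s(x, y) ∉ q₂.edges := (List.nodup_cons.mp hednd.2.1).1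
        have hq₁H : ∀ e ∈ q₁.edges, e ∈ H.edgeSet := fun e hee =>
          hGHedge e (q₁.edges_subset_edgeSet hee) (fun hc => he1 (hc ▸ hee))
        have hq₂H : ∀ e ∈ q₂.edges, e ∈ H.edgeSet := fun e hee =>
          hGHedge e (q₂.edges_subset_edgeSet hee) (fun hc => he2 (hc ▸ hee))
        have hq₁path : q₁.IsPath := by
          have hh := D.isPath h
          rw [heqq] at hh
          exact hh.of_append_left
        have hq₂path : q₂.IsPath := by
          have hh := D.isPath h
          rw [heqq] at hh
          exact hh.of_append_right.of_cons
        have hinner : (p.reverse.append (q₂.transfer H hq₂H)).IsPath := by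
          refine isPath_append hp.1.reverse (hq₂path.transfer _) ?_
          intro w hwp hwq
          rw [Walk.support_reverse, List.mem_reverse] at hwp
          rw [Walk.support_transfer] at hwq
          by_contra hwx
          by_cases hwy : w = y
          · exact hyq₂ (hwy ▸ hwq)
          · exact hSfree w ⟨hwp, hwx, hwy⟩ (hsub2 w hwq)
        refine ⟨(q₁.transfer H hq₁H).append (p.reverse.append (q₂.transfer H hq₂H)), ?_, ?_⟩
        · refine isPath_append (hq₁path.transfer _) hinner ?_
          intro w hw1 hw2
          rw [Walk.support_transfer] at hw1
          rw [Walk.mem_support_append_iff] at hw2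
          rcases hw2 with hw2 | hw2
          · rw [Walk.support_reverse, List.mem_reverse] at hw2
            by_contra hwy
            by_cases hwx : w = x
            · exact hxq₁ (hwx ▸ hw1)
            · exact hSfree w ⟨hw2, hwx, hwy⟩ (hsub1 w hw1)
          · rw [Walk.support_transfer] at hw2
            exact absurd hw2 (fun hh => hdisj _ hw1 _ hh rfl)
        · intro w hw
          rw [Walk.mem_support_append_iff] at hw
          rcases hw with hw | hw
          · rw [Walk.support_transfer] at hw
            exact Or.inl (hsub1 w hw)
          · rw [Walk.mem_support_append_iff] at hw
            rcases hw with hw | hw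
            · rw [Walk.support_reverse, List.mem_reverse] at hw
              exact Or.inr ⟨he, hw⟩
            · rw [Walk.support_transfer] at hw
              exact Or.inl (hsub2 w hw)
    · have hqH : ∀ e ∈ (D.path h).edges, e ∈ H.edgeSet := fun e hee =>
        hGHedge e ((D.path h).edges_subset_edgeSet hee) (fun hc => he (hc ▸ hee))
      refine ⟨(D.path h).transfer H hqH, (D.isPath h).transfer _, ?_⟩
      intro w hw
      rw [Walk.support_transfer] at hw
      exact Or.inl hw
  refine ⟨⟨D.f, D.inj, fun u v h => (hbuild h).choose, fun u v h => (hbuild h).choose_spec.1,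
    ?_, ?_⟩⟩
  · intro u v h w hw ⟨t, hwt⟩
    rcases (hbuild h).choose_spec.2 w hw with hq | ⟨he, hps⟩
    · exact D.internal_not_branch h w hq ⟨t, hwt⟩
    · have hwnS : w ∉ S := hwt ▸ hCaseI ⟨u, v, h, he⟩ t
      have : w = x ∨ w = y := by
        by_contra hcon
        push_neg at hcon
        exact hwnS ⟨hps, hcon.1, hcon.2⟩
      rcases this with rfl | rfl
      · exact D.internal_not_branch h w (hxy_mem h he).1 ⟨t, hwt⟩
      · exact D.internal_not_branch h w (hxy_mem h he).2 ⟨t, hwt⟩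
  · intro u v u' v' h h' hne w hw hw'
    rcases (hbuild h).choose_spec.2 w hw with hq | ⟨he, hps⟩ <;>
      rcases (hbuild h').choose_spec.2 w hw' with hq' | ⟨he', hps'⟩
    · exact D.internal_disjoint h h' hne w hq hq'
    · -- w via old h, via p-part of h'
      by_cases hwS : w ∈ S
      · exact absurd hq (hBdiff h' he' h (Ne.symm hne) w hwS)
      · have : w = x ∨ w = y := by
          by_contra hcon
          push_neg at hcon
          exact hwS ⟨hps', hcon.1, hcon.2⟩
        rcases this with rfl | rfl
        · exact D.internal_disjoint h h' hne w hq (hxy_mem h' he').1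
        · exact D.internal_disjoint h h' hne w hq (hxy_mem h' he').2
    · by_cases hwS : w ∈ S
      · exact absurd hq' (hBdiff h he h' hne w hwS)
      · have : w = x ∨ w = y := by
          by_contra hcon
          push_neg at hcon
          exact hwS ⟨hps, hcon.1, hcon.2⟩
        rcases this with rfl | rfl
        · exact D.internal_disjoint h h' hne w (hxy_mem h he).1 hq'
        · exact D.internal_disjoint h h' hne w (hxy_mem h he).2 hq'
    · exact absurd (hU h he h' he') hne


lemma step_preserves {V : Type u} {A B : SimpleGraph V}
    (hstep : AddCompliantStep A B) (hA : Outerplanar A) : Outerplanar B := by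
  obtain ⟨x, y, hxy, hnadj, ⟨p, hp⟩, rfl⟩ := hstep
  have hGadj : ∀ a b : V, (A ⊔ SimpleGraph.fromEdgeSet {s(x, y)}).Adj a b ↔
      A.Adj a b ∨ s(a, b) = s(x, y) := by
    intro a b
    rw [sup_adj, fromEdgeSet_adj]
    constructor
    · rintro (h | ⟨h, -⟩)
      · exact Or.inl h
      · exact Or.inr h
    · rintro (h | h)
      · exact Or.inl h
      · refine Or.inr ⟨h, ?_⟩
        intro hab
        rw [hab, Sym2.eq_iff] at h
        rcases h with ⟨h1, h2⟩ | ⟨h1, h2⟩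
        · exact hxy (h1.symm.trans h2)
        · exact hxy (h2.symm.trans h1)
  constructor
  · rintro ⟨D⟩
    exact hA.1 (main_step _ goodK4 A x y hxy p hp _ hGadj D)
  · rintro ⟨D⟩
    exact hA.2 (main_step _ goodK23 A x y hxy p hp _ hGadj D)

end Stmt19


/-- If `G` is obtained from `H` by iteratively adding compliant edges and `H` is
outerplanar, then `G` is outerplanar. -/
theorem stmt19 {V : Type u} (H G : SimpleGraph V)
    (hiter : Relation.ReflTransGen AddCompliantStep H G)
    (hop : Outerplanar H) : Outerplanar G := by
  induction hiter with
  | refl => exact hop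
  | tail _ hstep ih => exact Stmt19.step_preserves hstep ih
end
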